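/- arXiv:math/0310188 — 4 statements merged into one kernel-verified Lean document; each statement's English description precedes it below -/
import Mathlib

section
/- For every positive integer n, the map \Phi is a bijection from DPP(n) onto L(n), the set of nonintersecting lattice-path families whose i-th path runs from (0, h_i) to (h_i - 2, 0) for some integers n \ge h_1 > h_2 > … > h_k \ge 2. -/
/-- The entry of the array at row `r` (0-indexed) and position `p` within that row
(this is the entry in column `r + p`, 0-indexed, i.e. `π_{r+1, r+p+1}` in 1-indexed terms). -/
def entry? (rows : List (List ℕ)) (r p : ℕ) : Option ℕ :=
  rows[r]?.bind fun row => row[p]?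

/-- `rows` is a `d`-descending plane partition with all entries ≤ `n`.
Row `i` (1-indexed) has `λ_i - i + 1` entries, so `λ_i = (length of row i) + i - 1`;
the condition `λ_1 ≥ λ_2 ≥ ⋯ ≥ λ_k ≥ k` is equivalent to the row lengths being
strictly decreasing and all rows being nonempty. -/
def IsDPP (d : ℤ) (n : ℕ) (rows : List (List ℕ)) : Prop :=
  -- all rows nonempty (this is `λ_k ≥ k` for each row)
  (∀ row ∈ rows, row ≠ []) ∧
  -- entries are positive integers, at most n
  (∀ row ∈ rows, ∀ x ∈ row, 0 < x ∧ x ≤ n) ∧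
  -- shape condition `λ_1 ≥ λ_2 ≥ ⋯`: row lengths strictly decrease
  rows.Chain' (fun a b => b.length < a.length) ∧
  -- entries weakly decrease along each row
  (∀ row ∈ rows, row.Chain' (fun x y => y ≤ x)) ∧
  -- entries strictly decrease down each column: the entry at position `p` of a row is in
  -- the same column as the entry at position `p+1` of the preceding row
  rows.Chain' (fun a b => ∀ p x y, b[p]? = some x → a[p + 1]? = some y → x < y) ∧
  -- the first entry of each row is strictly greater than (number of entries in the row) - d
  (∀ row ∈ rows, ∀ x, row.head? = some x → (row.length : ℤ) - d < (x : ℤ)) ∧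
  -- the first entry of each non-first row is at most (number of entries in previous row) - d
  rows.Chain' (fun a b => ∀ x, b.head? = some x → (x : ℤ) ≤ (a.length : ℤ) - d)

/-- The entrywise order on descending plane partitions: `π ≤ σ` iff whenever an
entry of `π` exists, the corresponding entry of `σ` exists and is at least as large. -/
def dppLe (π σ : List (List ℕ)) : Prop :=
  ∀ r p x, entry? π r p = some x → ∃ y, entry? σ r p = some y ∧ x ≤ y

/-- `i(π)`: the total number of entries. -/
def numEntries (rows : List (List ℕ)) : ℕ := (rows.map List.length).sum

/-- `r(π)` (for the bound `n`): the number of entries equal to `n`. -/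
def numEqual (n : ℕ) (rows : List (List ℕ)) : ℕ :=
  (rows.map fun row => row.count n).sum

/-- `s(π)`: the number of special entries, i.e. entries `π_{i,j}` with `π_{i,j} ≤ j - i`;
in 0-indexed terms, the entry at position `p` of a row is special iff it is `≤ p`. -/
def numSpecial (rows : List (List ℕ)) : ℕ :=
  (rows.map fun row =>
    ((Finset.range row.length).filter fun p => row.getD p 0 ≤ p).card).sum

/-- A lattice path, given by its starting point and its list of steps:
`true` is an east step `(1,0)`, `false` is a south step `(0,-1)`. -/
structure LPath where
  start : ℤ × ℤ
  steps : List Bool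

/-- The displacement vector of a step. -/
def stepVec (b : Bool) : ℤ × ℤ := if b then (1, 0) else (0, -1)

/-- The list of lattice points visited by a path. -/
def LPath.points (P : LPath) : List (ℤ × ℤ) :=
  P.steps.scanl (fun p b => p + stepVec b) P.start

/-- The endpoint of a path. -/
def LPath.finish (P : LPath) : ℤ × ℤ :=
  P.steps.foldl (fun p b => p + stepVec b) P.start

/-- The starting points of the east steps of a path (an east step starting at `(x,y)`
has height `y` and right endpoint `(x+1, y)`). -/
def LPath.eastSteps (P : LPath) : List (ℤ × ℤ) :=
  ((P.points.zip P.steps).filter fun q => q.2).map Prod.fst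

/-- A family of lattice paths is nonintersecting if no two paths share a lattice point. -/
def Nonintersecting (F : List LPath) : Prop :=
  F.Pairwise fun P Q => ∀ pt ∈ P.points, pt ∉ Q.points

/-- `L(n)`: families `(P_1, …, P_k)` of pairwise nonintersecting lattice paths such that
for some `n ≥ h_1 > h_2 > ⋯ > h_k ≥ 2`, the path `P_i` runs from `(0, h_i)` to `(h_i - 2, 0)`. -/
def InL (n : ℕ) (F : List LPath) : Prop :=
  (∀ P ∈ F, ∃ h : ℤ, 2 ≤ h ∧ h ≤ (n : ℤ) ∧ P.start = (0, h) ∧ P.finish = (h - 2, 0)) ∧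
  F.Chain' (fun P Q => Q.start.2 < P.start.2) ∧
  Nonintersecting F

/-- The steps of a path that starts at height `top` and takes its east steps at the
heights listed in `H` (weakly decreasing), ending at height `0`. -/
def stepsFromHeights : ℕ → List ℕ → List Bool
  | top, [] => List.replicate top false
  | top, h :: t => List.replicate (top - h) false ++ true :: stepsFromHeights h t

/-- The path associated to a row `π_{i,i}, π_{i,i+1}, …, π_{i,λ_i}` of a descending plane
partition: it starts at `(0, π_{i,i})`, takes its east steps at the heights
`π_{i,i+1}, …, π_{i,λ_i}` in this order, then takes `π_{i,i} - 2 - (λ_i - i)` further east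
steps at height `0`, ending at `(π_{i,i} - 2, 0)`. -/
def phiRow (row : List ℕ) : LPath :=
  match row with
  | [] => ⟨(0, 0), []⟩
  | a :: rest =>
      ⟨((0 : ℤ), (a : ℤ)), stepsFromHeights a (rest ++ List.replicate (a - 2 - rest.length) 0)⟩

/-- The map `Φ` from descending plane partitions to families of lattice paths. -/
def Phi (rows : List (List ℕ)) : List LPath := rows.map phiRow
namespace DPPAux

theorem chain'_iff_get' {α : Type*} {R : α → α → Prop} {l : List α} :
    List.Chain' R l ↔ ∀ (i : ℕ) (h : i < l.length - 1),
      R (l.get ⟨i, by omega⟩) (l.get ⟨i + 1, by omega⟩) := by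
  unfold List.Chain'
  rw [List.isChain_iff_getElem]
  constructor
  · intro h i hi; exact h i (by omega)
  · intro h i hi; exact h i (by omega)

theorem chain'_map' {α β : Type*} {R : α → α → Prop} (f : β → α) {l : List β} :
    List.Chain' R (l.map f) ↔ List.Chain' (fun a b => R (f a) (f b)) l :=
  List.isChain_map f

lemma points_cons (q : ℤ × ℤ) (b : Bool) (s : List Bool) :
    (LPath.points ⟨q, b :: s⟩) = q :: LPath.points ⟨q + stepVec b, s⟩ := by
  simp [LPath.points, List.scanl]

lemma finish_cons (q : ℤ × ℤ) (b : Bool) (s : List Bool) :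
    (LPath.finish ⟨q, b :: s⟩) = LPath.finish ⟨q + stepVec b, s⟩ := by
  simp [LPath.finish]

lemma finish_eq_count (s : List Bool) : ∀ (x y : ℤ),
    (LPath.finish ⟨(x, y), s⟩) = (x + s.count true, y - s.count false) := by
  induction s with
  | nil => simp [LPath.finish]
  | cons b t ih =>
    intro x y
    cases b <;> simp [finish_cons, stepVec, ih, List.count_cons, Prod.ext_iff] <;> push_cast <;> ring

lemma sfh_count_true (H : List ℕ) : ∀ top, (stepsFromHeights top H).count true = H.length := by
  induction H with
  | nil => intro top; simp [stepsFromHeights, List.count_replicate]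
  | cons h t ih => intro top; simp [stepsFromHeights, List.count_append, List.count_replicate, List.count_cons, ih]

lemma sfh_count_false (H : List ℕ) : ∀ top, List.Chain' (fun a b => b ≤ a) (top :: H) →
    (stepsFromHeights top H).count false = top := by
  induction H with
  | nil => intro top _; simp [stepsFromHeights, List.count_replicate]
  | cons h t ih =>
    intro top hc
    have hht : h ≤ top := (List.isChain_cons_cons.1 hc).1
    have := ih h (List.isChain_cons_cons.1 hc).2
    simp [stepsFromHeights, List.count_append, List.count_replicate, List.count_cons, this]
    omega

end DPPAux
namespace DPPAux

lemma mem_points_rep (k : ℕ) : ∀ (x y : ℤ) (s : List Bool) (q : ℤ × ℤ),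
    q ∈ LPath.points ⟨(x, y), List.replicate k false ++ s⟩ ↔
      ((q.1 = x ∧ y - k < q.2 ∧ q.2 ≤ y) ∨ q ∈ LPath.points ⟨(x, y - k), s⟩) := by
  induction k with
  | zero =>
    intro x y s q
    simp only [List.replicate_zero, List.nil_append, Nat.cast_zero, sub_zero]
    constructor
    · exact Or.inr
    · rintro (⟨h1, h2, h3⟩ | h)
      · omega
      · exact h
  | succ k ih =>
    intro x y s q
    rw [List.replicate_succ, List.cons_append, points_cons]
    simp only [List.mem_cons, stepVec, if_neg Bool.false_ne_true, Prod.mk_add_mk, add_zero]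
    rw [show (y + -1) = y - 1 by ring]
    simp only [ih x (y - 1) s q]
    have hyk : y - 1 - (k : ℤ) = y - ((k + 1 : ℕ) : ℤ) := by push_cast; ring
    rw [hyk]
    constructor
    · rintro (h | ⟨h1, h2, h3⟩ | h)
      · subst h; exact Or.inl ⟨rfl, by push_cast; omega, le_rfl⟩
      · exact Or.inl ⟨h1, h2, by omega⟩
      · exact Or.inr h
    · rintro (⟨h1, h2, h3⟩ | h)
      · by_cases hy : q.2 = y
        · left; ext <;> simp [h1, hy]
        · right; left; exact ⟨h1, h2, by omega⟩
      · right; right; exact h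

lemma mem_points_rep' (k : ℕ) (x y : ℤ) (q : ℤ × ℤ) :
    q ∈ LPath.points ⟨(x, y), List.replicate k false⟩ ↔
      (q.1 = x ∧ y - k ≤ q.2 ∧ q.2 ≤ y) := by
  rw [← List.append_nil (List.replicate k false), mem_points_rep]
  simp [LPath.points, Prod.ext_iff]
  constructor
  · rintro (⟨h1, h2, h3⟩ | ⟨h1, h2⟩)
    · exact ⟨h1, by omega, h3⟩
    · exact ⟨h1, by omega, by omega⟩
  · rintro ⟨h1, h2, h3⟩
    by_cases hy : q.2 = y - k
    · right; exact ⟨h1, hy⟩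
    · left; exact ⟨h1, by omega, h3⟩

lemma points_spec (H : List ℕ) : ∀ (top : ℕ) (x₀ : ℤ),
    List.Chain' (fun a b => b ≤ a) (top :: H) →
    ∀ q : ℤ × ℤ, q ∈ LPath.points ⟨(x₀, (top : ℤ)), stepsFromHeights top H⟩ ↔
      ∃ j : ℕ, j ≤ H.length ∧ q.1 = x₀ + j ∧ (H.getD j 0 : ℤ) ≤ q.2 ∧
        q.2 ≤ ((top :: H).getD j 0 : ℤ) := by
  induction H with
  | nil =>
    intro top x₀ _ q
    simp only [stepsFromHeights]
    rw [mem_points_rep']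
    constructor
    · rintro ⟨h1, h2, h3⟩
      exact ⟨0, by simp, by simpa using h1, by simpa using h2.trans' (by omega), by simpa using h3⟩
    · rintro ⟨j, hj, h1, h2, h3⟩
      have hj0 : j = 0 := by simpa using hj
      subst hj0
      simp only [List.getD_nil, List.getD_cons_zero, Nat.cast_zero] at h2 h3
      exact ⟨by simpa using h1, by omega, h3⟩
  | cons h t ih =>
    intro top x₀ hc q
    have hht : h ≤ top := (List.isChain_cons_cons.1 hc).1
    have hc' := (List.isChain_cons_cons.1 hc).2
    simp only [stepsFromHeights]
    rw [mem_points_rep]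
    have hth : ((top : ℤ) - (top - h : ℕ)) = (h : ℤ) := by push_cast; omega
    rw [hth, points_cons]
    simp only [stepVec, ite_true, List.mem_cons, Prod.mk_add_mk, add_zero]
    rw [ih h (x₀ + 1) hc']
    constructor
    · rintro (⟨h1, h2, h3⟩ | h4 | ⟨j, hj, h1, h2, h3⟩)
      · refine ⟨0, by simp, by simpa using h1, ?_, by simpa using h3⟩
        simp only [List.getD_cons_zero]; push_cast at h2 ⊢; omega
      · exact ⟨0, by simp, by simp [h4], by simp [h4], by simp [h4]; omega⟩
      · exact ⟨j + 1, by simpa using hj, by rw [h1]; push_cast; ring, by simpa using h2, by simpa using h3⟩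
    · rintro ⟨j, hj, h1, h2, h3⟩
      match j with
      | 0 =>
        simp only [List.getD_cons_zero] at h2 h3
        by_cases h0 : q.2 = (h : ℤ)
        · right; left; ext <;> simp [h1, h0]
        · left; refine ⟨by simpa using h1, ?_, h3⟩; push_cast; omega
      | j + 1 =>
        right; right
        exact ⟨j, by simpa using hj, by rw [h1]; push_cast; ring, by simpa using h2, by simpa using h3⟩

end DPPAux
namespace DPPAux

/-- heights of east steps of a step list, starting at height `y`. -/
def ehN : ℕ → List Bool → List ℕ
  | _, [] => []
  | y, true :: s => y :: ehN y s
  | y, false :: s => ehN (y - 1) s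

lemma ehN_le (s : List Bool) : ∀ y, ∀ x ∈ ehN y s, x ≤ y := by
  induction s with
  | nil => simp [ehN]
  | cons b t ih =>
    intro y x hx
    cases b with
    | true =>
      simp only [ehN, List.mem_cons] at hx
      rcases hx with rfl | hx
      · exact le_rfl
      · exact ih y x hx
    | false => exact (ih (y - 1) x hx).trans (Nat.sub_le y 1)

lemma ehN_chain (s : List Bool) : ∀ y, List.Chain' (fun a b => b ≤ a) (y :: ehN y s) := by
  induction s with
  | nil => simp [ehN, List.Chain', List.isChain_singleton]
  | cons b t ih =>
    intro y
    cases b with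
    | true => exact List.isChain_cons_cons.2 ⟨le_rfl, ih y⟩
    | false =>
      have := ih (y - 1)
      rcases h : ehN (y - 1) t with _ | ⟨a, l⟩
      · simp [ehN, h, List.Chain', List.isChain_singleton]
      · rw [h] at this
        simp only [ehN, h]
        exact List.isChain_cons_cons.2 ⟨(List.isChain_cons_cons.1 this).1.trans (Nat.sub_le y 1),
          (List.isChain_cons_cons.1 this).2⟩

lemma ehN_length (s : List Bool) : ∀ y, (ehN y s).length = s.count true := by
  induction s with
  | nil => simp [ehN]
  | cons b t ih =>
    intro y
    cases b <;> simp [ehN, ih, List.count_cons]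

lemma ehN_rep (k : ℕ) : ∀ y s, ehN y (List.replicate k false ++ s) = ehN (y - k) s := by
  induction k with
  | zero => simp
  | succ k ih =>
    intro y s
    rw [List.replicate_succ, List.cons_append]
    show ehN (y - 1) _ = _
    rw [ih]
    congr 1
    omega

lemma sfh_succ (m : ℕ) (E : List ℕ) (hE : ∀ x ∈ E, x ≤ m) :
    stepsFromHeights (m + 1) E = false :: stepsFromHeights m E := by
  cases E with
  | nil => simp [stepsFromHeights, List.replicate_succ]
  | cons h t =>
    have : m + 1 - h = (m - h) + 1 := by have := hE h (by simp); omega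
    simp [stepsFromHeights, this, List.replicate_succ]

/-- reconstruction: a step list ending at height 0 equals `stepsFromHeights`. -/
lemma steps_eq_sfh (s : List Bool) : ∀ top : ℕ, s.count false = top →
    stepsFromHeights top (ehN top s) = s := by
  induction s with
  | nil =>
    intro top h
    simp only [List.count_nil] at h
    subst h
    rfl
  | cons b t ih =>
    intro top h
    cases b with
    | true =>
      have h' : t.count false = top := by simpa using h
      show stepsFromHeights top (top :: ehN top t) = _
      simp only [stepsFromHeights, Nat.sub_self, List.replicate_zero, List.nil_append]
      rw [ih top h']
    | false =>
      simp only [List.count_cons] at h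
      have htop : t.count false + 1 = top := by simpa using h
      have h1 : top - 1 = t.count false := by omega
      show stepsFromHeights top (ehN (top - 1) t) = _
      have := sfh_succ (top - 1) (ehN (top - 1) t) (ehN_le t (top - 1))
      rw [show top - 1 + 1 = top by omega] at this
      rw [this, ih (top - 1) h1.symm]

/-- converse: east heights of `stepsFromHeights` recover `H`. -/
lemma ehN_sfh (H : List ℕ) : ∀ top, List.Chain' (fun a b => b ≤ a) (top :: H) →
    ehN top (stepsFromHeights top H) = H := by
  induction H with
  | nil =>
    intro top _
    show ehN top (List.replicate top false) = []
    rw [← List.append_nil (List.replicate top false), ehN_rep]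
    rfl
  | cons h t ih =>
    intro top hc
    have hht : h ≤ top := (List.isChain_cons_cons.1 hc).1
    show ehN top (List.replicate (top - h) false ++ (true :: stepsFromHeights h t)) = _
    rw [ehN_rep, show top - (top - h) = h by omega]
    show h :: ehN h (stepsFromHeights h t) = _
    rw [ih h (List.isChain_cons_cons.1 hc).2]

end DPPAux
namespace DPPAux

lemma getD_anti {l : List ℕ} (hl : List.Chain' (fun a b => b ≤ a) l) {i j : ℕ} (hij : i ≤ j) :
    l.getD j 0 ≤ l.getD i 0 := by
  by_cases hj : j < l.length
  · have hi : i < l.length := lt_of_le_of_lt hij hj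
    rw [List.getD_eq_getElem _ _ hj, List.getD_eq_getElem _ _ hi]
    rcases eq_or_lt_of_le hij with rfl | h
    · exact le_rfl
    · exact List.pairwise_iff_get.1 (List.isChain_iff_pairwise.1 hl) ⟨i, hi⟩ ⟨j, hj⟩ (by simpa using h)
  · rw [List.getD_eq_default _ _ (le_of_not_gt hj)]
    exact Nat.zero_le _

lemma getD_append_rep (A : List ℕ) (m x : ℕ) :
    (A ++ List.replicate m 0).getD x 0 = A.getD x 0 := by
  by_cases hx : x < A.length
  · rw [List.getD_eq_getElem _ _ (by simp; omega), List.getD_eq_getElem _ _ hx,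
      List.getElem_append_left hx]
  · rw [List.getD_eq_default _ _ (le_of_not_gt hx)]
    by_cases hx2 : x < A.length + m
    · rw [List.getD_eq_getElem _ _ (by simpa using hx2), List.getElem_append_right (le_of_not_gt hx)]
      simp
    · rw [List.getD_eq_default _ _ (by simp; omega)]

lemma le_head {t : List ℕ} {a : ℕ} (h : List.Chain' (fun x y => y ≤ x) (a :: t)) :
    ∀ x ∈ t, x ≤ a :=
  (List.pairwise_cons.1 (List.isChain_iff_pairwise.1 h)).1

lemma dropWhile_zero : ∀ l : List ℕ, List.Chain' (fun a b => b ≤ a) l →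
    ∀ x ∈ l.dropWhile (fun m => decide (0 < m)), x = 0 := by
  intro l
  induction l with
  | nil => simp
  | cons a t ih =>
    intro hc x hx
    by_cases ha : 0 < a
    · rw [List.dropWhile_cons_of_pos (by simpa using ha)] at hx
      exact ih hc.tail x hx
    · have ha0 : a = 0 := by omega
      rw [List.dropWhile_cons_of_neg (by simpa using ha)] at hx
      rcases List.mem_cons.1 hx with rfl | hx
      · exact ha0
      · have := le_head hc x hx
        omega

lemma tw_dw_length (l : List ℕ) (p : ℕ → Bool) :
    (l.takeWhile p).length + (l.dropWhile p).length = l.length := by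
  have h2 := congrArg List.length (List.takeWhile_append_dropWhile (p := p) (l := l))
  rwa [List.length_append] at h2

lemma takeWhile_spec {l : List ℕ} (hl : List.Chain' (fun a b => b ≤ a) l) :
    l = l.takeWhile (fun m => decide (0 < m)) ++
      List.replicate (l.length - (l.takeWhile (fun m => decide (0 < m))).length) 0 := by
  conv_lhs => rw [← List.takeWhile_append_dropWhile (p := fun m => decide (0 < m)) (l := l)]
  congr 1
  refine List.eq_replicate_iff.2 ⟨?_, dropWhile_zero l hl⟩
  have := tw_dw_length l (fun m => decide (0 < m))
  omega

lemma getD_pos_iff {l : List ℕ} (hl : List.Chain' (fun a b => b ≤ a) l) (x : ℕ) :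
    0 < l.getD x 0 ↔ x < (l.takeWhile (fun m => decide (0 < m))).length := by
  set T := l.takeWhile (fun m => decide (0 < m)) with hT
  have hld : l.getD x 0 = T.getD x 0 := by
    conv_lhs => rw [takeWhile_spec hl]
    exact getD_append_rep _ _ _
  rw [hld]
  constructor
  · intro h
    by_contra hx
    rw [List.getD_eq_default _ _ (le_of_not_gt hx)] at h
    omega
  · intro h
    rw [List.getD_eq_getElem _ _ h]
    have hmem : T[x] ∈ l.takeWhile (fun m => decide (0 < m)) := by
      rw [← hT]; exact List.getElem_mem _
    have := List.mem_takeWhile_imp hmem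
    simpa using this

/-- getD of the takeWhile prefix agrees with getD of the list, within the prefix. -/
lemma getD_takeWhile {l : List ℕ} (hl : List.Chain' (fun a b => b ≤ a) l) (x : ℕ)
    (hx : x < (l.takeWhile (fun m => decide (0 < m))).length) :
    (l.takeWhile (fun m => decide (0 < m))).getD x 0 = l.getD x 0 := by
  conv_rhs => rw [takeWhile_spec hl]
  rw [getD_append_rep]

end DPPAux
namespace DPPAux

/-- abstract ordering on path data `(top, heights)` forcing strict separation. -/
def Rel (P Q : ℕ × List ℕ) : Prop :=
  Q.1 < P.1 ∧ Q.2.length < P.2.length ∧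
    ∀ x ≤ Q.2.length, (Q.1 :: Q.2).getD x 0 < P.2.getD x 0

lemma Rel.trans' {P Q R : ℕ × List ℕ}
    (hQ : List.Chain' (fun a b => b ≤ a) (Q.1 :: Q.2))
    (h1 : Rel P Q) (h2 : Rel Q R) : Rel P R := by
  obtain ⟨hlt1, hlen1, hx1⟩ := h1
  obtain ⟨hlt2, hlen2, hx2⟩ := h2
  refine ⟨hlt2.trans hlt1, hlen2.trans hlen1, fun x hx => ?_⟩
  have e1 : (R.1 :: R.2).getD x 0 < Q.2.getD x 0 := hx2 x hx
  have e2 : Q.2.getD x 0 = (Q.1 :: Q.2).getD (x + 1) 0 := rfl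
  have e3 : (Q.1 :: Q.2).getD (x + 1) 0 ≤ (Q.1 :: Q.2).getD x 0 :=
    getD_anti hQ (Nat.le_succ x)
  have e4 : (Q.1 :: Q.2).getD x 0 < P.2.getD x 0 :=
    hx1 x (le_of_lt (lt_of_le_of_lt hx hlen2))
  omega

lemma pairwise_rel : ∀ l : List (ℕ × List ℕ),
    (∀ p ∈ l, List.Chain' (fun a b => b ≤ a) (p.1 :: p.2)) →
    List.Chain' Rel l → List.Pairwise Rel l := by
  intro l
  induction l with
  | nil => intro _ _; exact List.Pairwise.nil
  | cons a l ih =>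
    intro hg hc
    have hpl : List.Pairwise Rel l := ih (fun p hp => hg p (List.mem_cons_of_mem a hp)) hc.tail
    refine List.pairwise_cons.2 ⟨?_, hpl⟩
    intro b hb
    match l, hb with
    | c :: l', hb =>
      have hac : Rel a c := List.isChain_cons_cons.1 hc |>.1
      rcases List.mem_cons.1 hb with rfl | hb'
      · exact hac
      · have hcb : Rel c b := (List.pairwise_cons.1 hpl).1 b hb'
        exact Rel.trans' (hg c (by simp)) hac hcb

/-- the path attached to data `(top, H)`. -/
def dPath (a : ℕ) (H : List ℕ) : LPath := ⟨((0 : ℤ), (a : ℤ)), stepsFromHeights a H⟩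

lemma disjoint_of_rel {a b : ℕ} {H K : List ℕ}
    (hH : List.Chain' (fun x y => y ≤ x) (a :: H))
    (hK : List.Chain' (fun x y => y ≤ x) (b :: K))
    (hrel : Rel (a, H) (b, K)) :
    ∀ pt ∈ (dPath a H).points, pt ∉ (dPath b K).points := by
  intro pt hP hQ
  rw [dPath, points_spec H a 0 hH] at hP
  rw [dPath, points_spec K b 0 hK] at hQ
  obtain ⟨j, hj, hx, hlo, -⟩ := hP
  obtain ⟨j', hj', hx', -, hhi⟩ := hQ
  have hjj : j = j' := by
    rw [hx] at hx'
    have : (j : ℤ) = (j' : ℤ) := by omega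
    exact_mod_cast this
  subst hjj
  have h5 : ((b :: K).getD j 0) < H.getD j 0 := hrel.2.2 j hj'
  have h6 : ((b :: K).getD j 0 : ℤ) < (H.getD j 0 : ℤ) := by exact_mod_cast h5
  omega

lemma rel_of_disjoint {a b : ℕ} {H K : List ℕ}
    (hH : List.Chain' (fun x y => y ≤ x) (a :: H))
    (hK : List.Chain' (fun x y => y ≤ x) (b :: K))
    (hba : b < a) (hlen : K.length < H.length)
    (hdisj : ∀ pt ∈ (dPath a H).points, pt ∉ (dPath b K).points) :
    Rel (a, H) (b, K) := by
  have key : ∀ x ≤ K.length, (b :: K).getD x 0 < H.getD x 0 := by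
    intro x
    induction x with
    | zero =>
      intro _
      simp only [List.getD_cons_zero]
      by_contra hcon
      push_neg at hcon
      have hPmem : ((0 : ℤ), (b : ℤ)) ∈ (dPath a H).points := by
        rw [dPath, points_spec H a 0 hH]
        refine ⟨0, Nat.zero_le _, by simp, ?_, ?_⟩
        · show (H.getD 0 0 : ℤ) ≤ (b : ℤ)
          exact_mod_cast hcon
        · show (b : ℤ) ≤ (((a :: H).getD 0 0 : ℕ) : ℤ)
          simp only [List.getD_cons_zero]
          exact_mod_cast hba.le
      have hQmem : ((0 : ℤ), (b : ℤ)) ∈ (dPath b K).points := by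
        rw [dPath, points_spec K b 0 hK]
        refine ⟨0, Nat.zero_le _, by simp, ?_, ?_⟩
        · show (K.getD 0 0 : ℤ) ≤ (b : ℤ)
          have : K.getD 0 0 = (b :: K).getD 1 0 := rfl
          have h2 : (b :: K).getD 1 0 ≤ (b :: K).getD 0 0 := getD_anti hK (by omega)
          simp only [List.getD_cons_zero] at h2
          push_cast
          omega
        · show (b : ℤ) ≤ (((b :: K).getD 0 0 : ℕ) : ℤ)
          simp
      exact hdisj _ hPmem hQmem
    | succ x ihx =>
      intro hx1
      have ihx' := ihx (by omega)
      by_contra hcon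
      push_neg at hcon
      set u := K.getD x 0 with hu
      have hKx : (b :: K).getD (x + 1) 0 = u := rfl
      rw [hKx] at hcon
      have hub : u ≤ (b :: K).getD x 0 := by
        rw [← hKx]; exact getD_anti hK (by omega)
      have hPmem : (((x : ℤ) + 1), (u : ℤ)) ∈ (dPath a H).points := by
        rw [dPath, points_spec H a 0 hH]
        refine ⟨x + 1, by omega, by push_cast; ring, ?_, ?_⟩
        · show (H.getD (x + 1) 0 : ℤ) ≤ (u : ℤ)
          exact_mod_cast hcon
        · show (u : ℤ) ≤ (((a :: H).getD (x + 1) 0 : ℕ) : ℤ)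
          have e1 : (a :: H).getD (x + 1) 0 = H.getD x 0 := rfl
          rw [e1]
          push_cast
          omega
      have hQmem : (((x : ℤ) + 1), (u : ℤ)) ∈ (dPath b K).points := by
        rw [dPath, points_spec K b 0 hK]
        refine ⟨x + 1, by omega, by push_cast; ring, ?_, ?_⟩
        · show (K.getD (x + 1) 0 : ℤ) ≤ (u : ℤ)
          have : K.getD (x + 1) 0 ≤ K.getD x 0 := getD_anti hK.tail (by omega)
          push_cast
          omega
        · show (u : ℤ) ≤ (((b :: K).getD (x + 1) 0 : ℕ) : ℤ)
          rw [hKx]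
      exact hdisj _ hPmem hQmem
  exact ⟨hba, hlen, key⟩

end DPPAux
namespace DPPAux

lemma chain_rep_zero (m : ℕ) : List.Chain' (fun a b => b ≤ a) (List.replicate m (0 : ℕ)) := by
  induction m with
  | zero => simp [List.Chain', List.isChain_nil]
  | succ k ih =>
    cases k with
    | zero => simp [List.Chain', List.isChain_singleton]
    | succ k' => exact List.isChain_cons_cons.2 ⟨le_rfl, ih⟩

lemma chain_append_zeros (l : List ℕ) (m : ℕ) (h : List.Chain' (fun a b => b ≤ a) l) :
    List.Chain' (fun a b => b ≤ a) (l ++ List.replicate m 0) := by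
  rw [List.Chain', List.isChain_append]
  refine ⟨h, chain_rep_zero m, ?_⟩
  intro x _ y hy
  have : y = 0 := by
    rcases m with _ | m
    · simp at hy
    · rw [List.head?_replicate] at hy
      simp at hy
      omega
  omega

lemma takeWhile_all {A : List ℕ} (m : ℕ) (h : ∀ x ∈ A, 0 < x) :
    (A ++ List.replicate m 0).takeWhile (fun x => decide (0 < x)) = A := by
  induction A with
  | nil =>
    rcases m with _ | m
    · rfl
    · simp [List.replicate_succ, List.takeWhile_cons_of_neg]
  | cons a A ih =>
    rw [List.cons_append, List.takeWhile_cons_of_pos (by simpa using h a (by simp))]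
    rw [ih (fun x hx => h x (by simp [hx]))]

lemma dpp_rel {a b : ℕ} {A B : List ℕ}
    (ha : A.length + 2 ≤ a) (hb : B.length + 2 ≤ b) (hb2 : 2 ≤ b)
    (hApos : ∀ x ∈ A, 0 < x)
    (hhead : b ≤ A.length + 1)
    (hcol : ∀ p x y, (b :: B)[p]? = some x → (a :: A)[p + 1]? = some y → x < y) :
    Rel (a, A ++ List.replicate (a - 2 - A.length) 0) (b, B ++ List.replicate (b - 2 - B.length) 0) := by
  have hba : b < a := by omega
  have hHlen : (A ++ List.replicate (a - 2 - A.length) 0).length = a - 2 := by simp; omega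
  have hKlen : (B ++ List.replicate (b - 2 - B.length) 0).length = b - 2 := by simp; omega
  refine ⟨hba, by rw [hHlen, hKlen]; omega, ?_⟩
  intro x hx
  rw [hKlen] at hx
  have hHx : (A ++ List.replicate (a - 2 - A.length) 0).getD x 0 = A.getD x 0 :=
    getD_append_rep _ _ _
  rw [hHx]
  match x with
  | 0 =>
    have hA0 : 0 < A.length := by omega
    have h1 : (b :: B)[0]? = some b := List.getElem?_cons_zero
    have h2 : (a :: A)[0 + 1]? = some (A.getD 0 0) := by
      rw [List.getElem?_cons_succ, List.getElem?_eq_getElem hA0, List.getD_eq_getElem _ _ hA0]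
    have := hcol 0 b (A.getD 0 0) h1 h2
    simpa using this
  | x + 1 =>
    have hxA : x + 1 < A.length := by omega
    have hKx : ((b :: (B ++ List.replicate (b - 2 - B.length) 0)).getD (x + 1) 0) =
        B.getD x 0 := by
      rw [List.getD_cons_succ]
      exact getD_append_rep _ _ _
    rw [hKx]
    by_cases hxB : x < B.length
    · have h1 : (b :: B)[x + 1]? = some (B.getD x 0) := by
        rw [List.getElem?_cons_succ, List.getElem?_eq_getElem hxB, List.getD_eq_getElem _ _ hxB]
      have h2 : (a :: A)[x + 1 + 1]? = some (A.getD (x + 1) 0) := by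
        rw [List.getElem?_cons_succ, List.getElem?_eq_getElem hxA, List.getD_eq_getElem _ _ hxA]
      exact hcol (x + 1) _ _ h1 h2
    · rw [List.getD_eq_default _ _ (le_of_not_gt hxB)]
      have : A.getD (x + 1) 0 ∈ A := by
        rw [List.getD_eq_getElem _ _ hxA]
        exact List.getElem_mem _
      exact hApos _ this

lemma rel_to_dpp {a b : ℕ} {H K : List ℕ}
    (hH : List.Chain' (fun x y => y ≤ x) (a :: H))
    (hK : List.Chain' (fun x y => y ≤ x) (b :: K))
    (hHlen : H.length + 2 = a) (hKlen : K.length + 2 = b)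
    (hrel : Rel (a, H) (b, K)) :
    (K.takeWhile (fun m => decide (0 < m))).length <
        (H.takeWhile (fun m => decide (0 < m))).length ∧
      b ≤ (H.takeWhile (fun m => decide (0 < m))).length + 1 ∧
      (∀ p x y, (b :: K.takeWhile (fun m => decide (0 < m)))[p]? = some x →
        (a :: H.takeWhile (fun m => decide (0 < m)))[p + 1]? = some y → x < y) := by
  obtain ⟨hba, hlen, hkey⟩ := hrel
  simp only at hkey hlen hba
  have hHt : List.Chain' (fun x y => y ≤ x) H := hH.tail
  have hKt : List.Chain' (fun x y => y ≤ x) K := hK.tail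
  have hpos : ∀ x ≤ K.length, 0 < H.getD x 0 := fun x hx => by
    have := hkey x hx; omega
  have hTK : K.length < (H.takeWhile (fun m => decide (0 < m))).length := by
    have := hpos K.length le_rfl
    rwa [getD_pos_iff hHt] at this
  have hUK : (K.takeWhile (fun m => decide (0 < m))).length ≤ K.length := by
    have := tw_dw_length K (fun m => decide (0 < m))
    omega
  refine ⟨by omega, by omega, ?_⟩
  intro p x y hx hy
  rw [List.getElem?_cons_succ] at hy
  obtain ⟨hpT, hTy⟩ := List.getElem?_eq_some_iff.1 hy
  have hyH : y = H.getD p 0 := by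
    rw [← getD_takeWhile hHt p hpT, List.getD_eq_getElem _ _ hpT, hTy]
  match p, hx, hyH with
  | 0, hx, hyH =>
    rw [List.getElem?_cons_zero] at hx
    have hxb : x = b := (Option.some.inj hx).symm
    subst hxb
    have := hkey 0 (Nat.zero_le _)
    simp only [List.getD_cons_zero] at this
    omega
  | p + 1, hx, hyH =>
    rw [List.getElem?_cons_succ] at hx
    obtain ⟨hpU, hUx⟩ := List.getElem?_eq_some_iff.1 hx
    have hxK : x = K.getD p 0 := by
      rw [← getD_takeWhile hKt p hpU, List.getD_eq_getElem _ _ hpU, hUx]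
    have h9 := hkey (p + 1) (by omega)
    rw [List.getD_cons_succ] at h9
    omega

end DPPAux
namespace DPPAux

def rowH (a : ℕ) (A : List ℕ) : List ℕ := A ++ List.replicate (a - 2 - A.length) 0

lemma phiRow_cons (a : ℕ) (A : List ℕ) : phiRow (a :: A) = dPath a (rowH a A) := rfl

def psiRow (P : LPath) : List ℕ :=
  P.start.2.toNat :: (ehN P.start.2.toNat P.steps).takeWhile (fun m => decide (0 < m))

def topOf (P : LPath) : ℕ := P.start.2.toNat
def EOf (P : LPath) : List ℕ := ehN (topOf P) P.steps

lemma psiRow_eq (P : LPath) :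
    psiRow P = topOf P :: (EOf P).takeWhile (fun m => decide (0 < m)) := rfl

lemma rowH_length {a : ℕ} {A : List ℕ} (h : A.length + 2 ≤ a) :
    (rowH a A).length = a - 2 := by simp [rowH]; omega

lemma rowH_chain {a : ℕ} {A : List ℕ} (h : List.Chain' (fun x y => y ≤ x) (a :: A)) :
    List.Chain' (fun x y => y ≤ x) (a :: rowH a A) := by
  have := chain_append_zeros (a :: A) (a - 2 - A.length) h
  rwa [List.cons_append] at this

lemma dPath_start (a : ℕ) (H : List ℕ) : (dPath a H).start = (0, (a : ℤ)) := rfl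

lemma dPath_finish {a : ℕ} {H : List ℕ} (hc : List.Chain' (fun x y => y ≤ x) (a :: H))
    (hlen : H.length + 2 = a) : (dPath a H).finish = ((a : ℤ) - 2, 0) := by
  rw [dPath, finish_eq_count, sfh_count_true, sfh_count_false H a hc]
  have : ((H.length : ℤ)) = (a : ℤ) - 2 := by omega
  rw [this]
  simp

lemma psi_phi {a : ℕ} {A : List ℕ} (ha : A.length + 2 ≤ a)
    (hc : List.Chain' (fun x y => y ≤ x) (a :: A)) (hpos : ∀ x ∈ A, 0 < x) :
    psiRow (phiRow (a :: A)) = a :: A := by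
  rw [phiRow_cons, psiRow]
  have hs : (dPath a (rowH a A)).start.2.toNat = a := by simp [dPath]
  rw [hs]
  have hsteps : (dPath a (rowH a A)).steps = stepsFromHeights a (rowH a A) := rfl
  rw [hsteps, ehN_sfh _ _ (rowH_chain hc), rowH, takeWhile_all _ hpos]

lemma dpp_row_facts {n : ℕ} {rows : List (List ℕ)} (hd : IsDPP 0 n rows) :
    ∀ row ∈ rows, ∃ a A, row = a :: A ∧ A.length + 2 ≤ a ∧ a ≤ n ∧
      (∀ x ∈ A, 0 < x) ∧ List.Chain' (fun x y => y ≤ x) (a :: A) := by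
  obtain ⟨hne, hent, hlen, hrch, hcol, hhead, hhle⟩ := hd
  intro row hrow
  obtain ⟨a, A, rfl⟩ := List.exists_cons_of_ne_nil (hne row hrow)
  have hh := hhead _ hrow a rfl
  simp only [List.length_cons, sub_zero] at hh
  have ha : A.length + 2 ≤ a := by exact_mod_cast (by omega : ((A.length : ℤ)) + 2 ≤ (a : ℤ))
  exact ⟨a, A, rfl, ha, (hent _ hrow a (by simp)).2,
    fun x hx => (hent _ hrow x (by simp [hx])).1, hrch _ hrow⟩

def rowData (row : List ℕ) : ℕ × List ℕ := (row.headD 0, rowH (row.headD 0) row.tail)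

lemma maps_to {n : ℕ} {rows : List (List ℕ)} (hd : IsDPP 0 n rows) : InL n (Phi rows) := by
  have hrf := dpp_row_facts hd
  obtain ⟨hne, hent, hlen, hrch, hcol, hhead, hhle⟩ := hd
  have hadj : ∀ (i : ℕ) (hi : i < rows.length - 1),
      Rel (rowData (rows.get ⟨i, by omega⟩)) (rowData (rows.get ⟨i + 1, by omega⟩)) := by
    intro i hi
    obtain ⟨a, A, hPA, ha, han, hApos, hAch⟩ := hrf _ (List.get_mem rows ⟨i, by omega⟩)
    obtain ⟨b, B, hQB, hb, hbn, hBpos, hBch⟩ := hrf _ (List.get_mem rows ⟨i + 1, by omega⟩)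
    have hcoli := (chain'_iff_get'.1 hcol) i hi
    have hhlei := (chain'_iff_get'.1 hhle) i hi
    rw [hPA, hQB] at hcoli hhlei ⊢
    have hble := hhlei b rfl
    simp only [List.length_cons, sub_zero] at hble
    have hble' : b ≤ A.length + 1 := by exact_mod_cast hble
    show Rel (a, rowH a A) (b, rowH b B)
    exact dpp_rel ha hb (by omega) hApos hble' hcoli
  refine ⟨?_, ?_, ?_⟩
  · intro P hP
    rw [Phi] at hP
    obtain ⟨row, hrow, rfl⟩ := List.mem_map.1 hP
    obtain ⟨a, A, rfl, ha, han, hpos, hch⟩ := hrf row hrow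
    refine ⟨(a : ℤ), by exact_mod_cast (show 2 ≤ a by omega), by exact_mod_cast han, ?_, ?_⟩
    · rw [phiRow_cons]; rfl
    · rw [phiRow_cons, dPath_finish (rowH_chain hch) (by rw [rowH_length ha]; omega)]
  · rw [Phi, chain'_map', chain'_iff_get']
    intro i hi
    obtain ⟨a, A, hPA, ha, _, _, _⟩ := hrf _ (List.get_mem rows ⟨i, by omega⟩)
    obtain ⟨b, B, hQB, hb, _, _, _⟩ := hrf _ (List.get_mem rows ⟨i + 1, by omega⟩)
    have := (hadj i hi).1
    rw [hPA, hQB] at this ⊢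
    show (phiRow (b :: B)).start.2 < (phiRow (a :: A)).start.2
    rw [phiRow_cons, phiRow_cons, dPath_start, dPath_start]
    simp only [rowData, List.headD_cons] at this
    show ((b : ℤ)) < ((a : ℤ))
    exact_mod_cast this
  · show List.Pairwise _ (rows.map phiRow)
    rw [List.pairwise_map]
    have hchainrel : rows.Chain' (fun r1 r2 => Rel (rowData r1) (rowData r2)) :=
      chain'_iff_get'.2 hadj
    have hpw : (rows.map rowData).Pairwise Rel := by
      apply pairwise_rel
      · intro p hp
        obtain ⟨row, hrow, rfl⟩ := List.mem_map.1 hp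
        obtain ⟨a, A, rfl, ha, _, _, hch⟩ := hrf row hrow
        exact rowH_chain hch
      · exact List.isChain_map rowData |>.2 hchainrel
    have hpw2 := List.pairwise_map.1 hpw
    refine hpw2.imp_of_mem ?_
    intro r1 r2 h1 h2 hrel
    obtain ⟨a, A, rfl, ha, _, _, hch1⟩ := hrf r1 h1
    obtain ⟨b, B, rfl, hb, _, _, hch2⟩ := hrf r2 h2
    rw [phiRow_cons, phiRow_cons]
    exact disjoint_of_rel (rowH_chain hch1) (rowH_chain hch2) hrel

end DPPAux
namespace DPPAux

lemma phi_left_inv {n : ℕ} {rows : List (List ℕ)} (hd : IsDPP 0 n rows) :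
    (Phi rows).map psiRow = rows := by
  have hrf := dpp_row_facts hd
  rw [Phi, List.map_map]
  have : ∀ row ∈ rows, (psiRow ∘ phiRow) row = id row := by
    intro row hrow
    obtain ⟨a, A, rfl, ha, _, hpos, hch⟩ := hrf row hrow
    exact psi_phi ha hch hpos
  rw [List.map_congr_left this, List.map_id]

lemma surj_aux {n : ℕ} {F : List LPath} (hF : InL n F) :
    IsDPP 0 n (F.map psiRow) ∧ Phi (F.map psiRow) = F := by
  obtain ⟨hex, hsc, hni⟩ := hF
  -- per-path facts
  have hpf : ∀ P ∈ F, 2 ≤ topOf P ∧ topOf P ≤ n ∧ P.start = ((0 : ℤ), (topOf P : ℤ)) ∧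
      (EOf P).length + 2 = topOf P ∧
      List.Chain' (fun x y => y ≤ x) (topOf P :: EOf P) ∧
      P = dPath (topOf P) (EOf P) := by
    intro P hP
    obtain ⟨h, h2, hn, hst, hfin⟩ := hex P hP
    have htop : ((topOf P : ℤ)) = h := by
      rw [topOf, hst]
      exact Int.toNat_of_nonneg (by omega)
    have h2t : 2 ≤ topOf P := by omega
    have hnt : topOf P ≤ n := by omega
    have hst' : P.start = ((0 : ℤ), (topOf P : ℤ)) := by rw [hst, htop]
    have hPP : P = ⟨((0 : ℤ), (topOf P : ℤ)), P.steps⟩ := by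
      have : P = ⟨P.start, P.steps⟩ := rfl
      conv_lhs => rw [this, hst']
    have hfin' : LPath.finish ⟨((0 : ℤ), (topOf P : ℤ)), P.steps⟩ = (h - 2, 0) := by
      rw [← hPP, hfin]
    rw [finish_eq_count, Prod.mk.injEq] at hfin'
    obtain ⟨hct, hcf⟩ := hfin'
    have hcf' : P.steps.count false = topOf P := by omega
    have hct' : P.steps.count true = topOf P - 2 := by omega
    have hElen : (EOf P).length + 2 = topOf P := by
      rw [EOf, ehN_length, hct']; omega
    have hchain := ehN_chain P.steps (topOf P)
    have hPd : P = dPath (topOf P) (EOf P) := by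
      rw [dPath, EOf, steps_eq_sfh _ _ hcf', ← hPP]
    exact ⟨h2t, hnt, hst', hElen, hchain, hPd⟩
  have hphipsi : ∀ P ∈ F, phiRow (psiRow P) = P := by
    intro P hP
    obtain ⟨h2t, hnt, hst', hElen, hchain, hPd⟩ := hpf P hP
    rw [psiRow_eq, phiRow_cons, rowH]
    have hEt : List.Chain' (fun x y => y ≤ x) (EOf P) := hchain.tail
    have hsp := takeWhile_spec hEt
    have hlen2 : topOf P - 2 - ((EOf P).takeWhile (fun m => decide (0 < m))).length =
        (EOf P).length - ((EOf P).takeWhile (fun m => decide (0 < m))).length := by omega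
    rw [hlen2, ← hsp, ← hPd]
  have hPhiF : Phi (F.map psiRow) = F := by
    rw [Phi, List.map_map]
    have : ∀ P ∈ F, (phiRow ∘ psiRow) P = id P := fun P hP => hphipsi P hP
    rw [List.map_congr_left this, List.map_id]
  refine ⟨?_, hPhiF⟩
  -- adjacent relation
  have hFlen : (F.map psiRow).length = F.length := by simp
  have hadj : ∀ (i : ℕ) (hi : i < F.length - 1),
      Rel (topOf (F.get ⟨i, by omega⟩), EOf (F.get ⟨i, by omega⟩))
        (topOf (F.get ⟨i + 1, by omega⟩), EOf (F.get ⟨i + 1, by omega⟩)) := by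
    intro i hi
    set P := F.get ⟨i, by omega⟩ with hPdef
    set Q := F.get ⟨i + 1, by omega⟩ with hQdef
    have hPm : P ∈ F := List.get_mem F ⟨i, by omega⟩
    have hQm : Q ∈ F := List.get_mem F ⟨i + 1, by omega⟩
    obtain ⟨h2P, hnP, hstP, hlenP, hchP, hdP⟩ := hpf P hPm
    obtain ⟨h2Q, hnQ, hstQ, hlenQ, hchQ, hdQ⟩ := hpf Q hQm
    have hlt : topOf Q < topOf P := by
      have := (chain'_iff_get'.1 hsc) i hi
      rw [← hPdef, ← hQdef, hstP, hstQ] at this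
      have h' : ((topOf Q : ℤ)) < ((topOf P : ℤ)) := this
      exact_mod_cast h'
    have hdisj : ∀ pt ∈ (dPath (topOf P) (EOf P)).points,
        pt ∉ (dPath (topOf Q) (EOf Q)).points := by
      have := List.pairwise_iff_get.1 hni ⟨i, by omega⟩ ⟨i + 1, by omega⟩ (by simp)
      rw [← hPdef, ← hQdef] at this
      rw [← hdP, ← hdQ]
      exact this
    exact rel_of_disjoint hchP hchQ hlt (by omega) hdisj
  have hdppadj : ∀ (i : ℕ) (hi : i < F.length - 1),
      ((EOf (F.get ⟨i + 1, by omega⟩)).takeWhile (fun m => decide (0 < m))).length <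
          ((EOf (F.get ⟨i, by omega⟩)).takeWhile (fun m => decide (0 < m))).length ∧
        topOf (F.get ⟨i + 1, by omega⟩) ≤
          ((EOf (F.get ⟨i, by omega⟩)).takeWhile (fun m => decide (0 < m))).length + 1 ∧
        (∀ p x y,
          (topOf (F.get ⟨i + 1, by omega⟩) ::
            (EOf (F.get ⟨i + 1, by omega⟩)).takeWhile (fun m => decide (0 < m)))[p]? = some x →
          (topOf (F.get ⟨i, by omega⟩) ::
            (EOf (F.get ⟨i, by omega⟩)).takeWhile (fun m => decide (0 < m)))[p + 1]? = some y →
          x < y) := by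
    intro i hi
    obtain ⟨h2P, hnP, hstP, hlenP, hchP, hdP⟩ := hpf _ (List.get_mem F ⟨i, by omega⟩)
    obtain ⟨h2Q, hnQ, hstQ, hlenQ, hchQ, hdQ⟩ := hpf _ (List.get_mem F ⟨i + 1, by omega⟩)
    exact rel_to_dpp hchP hchQ hlenP hlenQ (hadj i hi)
  -- getElem of mapped list
  have hget : ∀ (i : ℕ) (hi : i < F.length),
      (F.map psiRow).get ⟨i, by omega⟩ = psiRow (F.get ⟨i, hi⟩) := by
    intro i hi
    simp
  refine ⟨?_, ?_, ?_, ?_, ?_, ?_, ?_⟩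
  · intro row hrow
    obtain ⟨P, hP, rfl⟩ := List.mem_map.1 hrow
    rw [psiRow_eq]
    exact List.cons_ne_nil _ _
  · intro row hrow x hx
    obtain ⟨P, hP, rfl⟩ := List.mem_map.1 hrow
    obtain ⟨h2t, hnt, _, hElen, hch, _⟩ := hpf P hP
    rw [psiRow_eq] at hx
    rcases List.mem_cons.1 hx with rfl | hx
    · exact ⟨by omega, hnt⟩
    · have hpos : 0 < x := by simpa using List.mem_takeWhile_imp hx
      have hxE : x ∈ EOf P := (List.takeWhile_prefix _).subset hx
      have := ehN_le P.steps (topOf P) x hxE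
      exact ⟨hpos, by omega⟩
  · rw [chain'_iff_get']
    intro i hi
    rw [hFlen] at hi
    rw [hget i (by omega), hget (i + 1) (by omega), psiRow_eq, psiRow_eq]
    simp only [List.length_cons]
    have := (hdppadj i hi).1
    omega
  · intro row hrow
    obtain ⟨P, hP, rfl⟩ := List.mem_map.1 hrow
    obtain ⟨h2t, hnt, _, hElen, hch, _⟩ := hpf P hP
    rw [psiRow_eq]
    refine hch.prefix ?_
    obtain ⟨t, ht⟩ := List.takeWhile_prefix (l := EOf P) (fun m => decide (0 < m))
    exact ⟨t, by rw [List.cons_append, ht]⟩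
  · rw [chain'_iff_get']
    intro i hi
    rw [hFlen] at hi
    rw [hget i (by omega), hget (i + 1) (by omega), psiRow_eq, psiRow_eq]
    exact (hdppadj i hi).2.2
  · intro row hrow x hx
    obtain ⟨P, hP, rfl⟩ := List.mem_map.1 hrow
    obtain ⟨h2t, hnt, _, hElen, hch, _⟩ := hpf P hP
    rw [psiRow_eq] at hx
    have hxt : x = topOf P := (Option.some.inj hx).symm
    subst hxt
    rw [psiRow_eq]
    have htw : ((EOf P).takeWhile (fun m => decide (0 < m))).length ≤ (EOf P).length := by
      have := tw_dw_length (EOf P) (fun m => decide (0 < m))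
      omega
    simp only [List.length_cons, sub_zero]
    have : (((EOf P).takeWhile (fun m => decide (0 < m))).length + 1 : ℤ) < (topOf P : ℤ) := by
      push_cast
      omega
    exact_mod_cast this
  · rw [chain'_iff_get']
    intro i hi
    rw [hFlen] at hi
    rw [hget i (by omega), hget (i + 1) (by omega), psiRow_eq, psiRow_eq]
    intro x hx
    have hx' : ((topOf (F.get ⟨i + 1, by omega⟩)) : ℤ) = x := by simpa using hx
    rw [← hx']
    have := (hdppadj i hi).2.1
    simp only [List.length_cons, sub_zero]
    push_cast
    omega

theorem stmt1' (n : ℕ) (hn : 0 < n) :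
    Set.BijOn Phi {rows : List (List ℕ) | IsDPP 0 n rows} {F : List LPath | InL n F} := by
  refine ⟨?_, ?_, ?_⟩
  · intro rows hrows
    exact maps_to hrows
  · intro r1 h1 r2 h2 heq
    have e1 := phi_left_inv h1
    have e2 := phi_left_inv h2
    rw [← e1, ← e2, heq]
  · intro F hF
    obtain ⟨hdpp, hphi⟩ := surj_aux hF
    exact ⟨F.map psiRow, hdpp, hphi⟩

end DPPAux

/-- `Φ` is a bijection from the set of descending plane partitions with entries at
most `n` onto the set `L(n)` of nonintersecting lattice-path families. -/
theorem stmt1 (n : ℕ) (hn : 0 < n) :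
    Set.BijOn Phi {rows : List (List ℕ) | IsDPP 0 n rows} {F : List LPath | InL n F} := by
  exact DPPAux.stmt1' n hn
end

section
/- For every positive integer n and every \pi \in DPP(n) with k rows, the total number of entries i(\pi) equals k plus the total number of east steps at positive height among the paths of \Phi(\pi). -/
lemma eastSteps_cons (p : ℤ × ℤ) (b : Bool) (s : List Bool) :
    (LPath.eastSteps ⟨p, b :: s⟩) =
      (if b then [p] else []) ++ LPath.eastSteps ⟨p + stepVec b, s⟩ := by
  simp [LPath.eastSteps, LPath.points, List.scanl]
  cases b <;> simp

lemma eastSteps_replicate_false (p : ℤ × ℤ) (m : ℕ) (s : List Bool) :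
    LPath.eastSteps ⟨p, List.replicate m false ++ s⟩ =
      LPath.eastSteps ⟨p + (0, -(m : ℤ)), s⟩ := by
  induction m generalizing p with
  | zero => simp [show p + ((0 : ℤ), (0 : ℤ)) = p by ext <;> simp]
  | succ k ih =>
      rw [List.replicate_succ, List.cons_append, eastSteps_cons, ih]
      simp only [Bool.false_eq_true, if_neg, List.nil_append, stepVec, if_false]
      congr 2
      simp [Prod.ext_iff]
      ring

lemma count_pos_stepsFromHeights (x : ℤ) (top : ℕ) (H : List ℕ)
    (hle : ∀ h ∈ H, h ≤ top) (hch : H.Chain' (· ≥ ·)) :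
    ((LPath.eastSteps ⟨(x, (top : ℤ)), stepsFromHeights top H⟩).countP
        fun pt => decide (0 < pt.2)) = H.countP fun h => decide (0 < h) := by
  induction H generalizing x top with
  | nil =>
      rw [stepsFromHeights, ← List.append_nil (List.replicate top false),
        eastSteps_replicate_false]
      simp [LPath.eastSteps, LPath.points]
  | cons h t ih =>
      have hht : h ≤ top := hle h (by simp)
      have hcast : ((x, (top : ℤ)) + (0, -((top - h : ℕ) : ℤ))) = (x, (h : ℤ)) := by
        have : ((top - h : ℕ) : ℤ) = (top : ℤ) - h := by omega
        simp [this, Prod.ext_iff]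
      rw [stepsFromHeights, eastSteps_replicate_false, hcast, eastSteps_cons]
      have ht' : ∀ y ∈ t, y ≤ h := by
        have := (List.isChain_iff_pairwise.mp hch)
        intro y hy
        exact (List.pairwise_cons.mp this).1 y hy
      have hstart : ((x, (h : ℤ)) + stepVec true) = (x + 1, (h : ℤ)) := by
        simp [stepVec, Prod.ext_iff]
      rw [List.countP_append, hstart, ih (x + 1) h ht' hch.tail]
      simp [List.countP_cons]
      omega

/-- For every `π ∈ DPP(n)` with `k` rows, the total number of entries `i(π)` equals
`k` plus the number of east steps at positive height among the paths of `Φ(π)`. -/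
theorem stmt2 (n : ℕ) (hn : 0 < n) (rows : List (List ℕ)) (h : IsDPP 0 n rows) :
    numEntries rows =
      rows.length +
        ((Phi rows).map fun P => P.eastSteps.countP fun pt => decide (0 < pt.2)).sum := by
  have key : ∀ row ∈ rows,
      ((phiRow row).eastSteps.countP fun pt => decide (0 < pt.2)) + 1 = row.length := by
    intro row hrow
    obtain ⟨hne, hpos, _, hdec, _, hhead, _⟩ := h
    have hne' := hne row hrow
    match row with
    | [] => exact absurd rfl hne'
    | a :: rest =>
      have hdec' := hdec _ hrow
      have hle : ∀ y ∈ rest, y ≤ a := by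
        have := List.isChain_iff_pairwise.mp hdec'
        intro y hy
        exact (List.pairwise_cons.mp this).1 y hy
      have hle2 : ∀ y ∈ rest ++ List.replicate (a - 2 - rest.length) 0, y ≤ a := by
        intro y hy
        rcases List.mem_append.mp hy with h1 | h1
        · exact hle y h1
        · simp_all [List.eq_of_mem_replicate h1]
      have hch : (rest ++ List.replicate (a - 2 - rest.length) 0).Chain' (· ≥ ·) := by
        apply List.IsChain.append
        · exact hdec'.tail
        · exact List.isChain_replicate_of_rel _ le_rfl
        · intro x hx y hy
          simp [List.eq_of_mem_replicate (List.mem_of_mem_head? hy)]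
      have := count_pos_stepsFromHeights 0 a (rest ++ List.replicate (a - 2 - rest.length) 0)
        hle2 hch
      rw [phiRow]
      rw [this, List.countP_append]
      have h1 : rest.countP (fun h => decide (0 < h)) = rest.length := by
        apply List.countP_eq_length.mpr
        intro y hy
        simpa using (hpos _ hrow y (List.mem_cons_of_mem _ hy)).1
      have h2 : (List.replicate (a - 2 - rest.length) 0).countP (fun h => decide (0 < h)) = 0 := by
        simp [List.countP_eq_zero]
      rw [h1, h2]
      simp
  unfold numEntries Phi
  rw [List.map_map]
  have : rows.map List.length = rows.map fun row =>
      (((fun P => P.eastSteps.countP fun pt => decide (0 < pt.2)) ∘ phiRow) row) + 1 := by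
    apply List.map_congr_left
    intro row hrow
    exact (key row hrow).symm
  rw [this]
  rw [List.sum_map_add]
  simp [Nat.add_comm, List.sum_replicate]
end

section
/- For every positive integer n, the poset DPP(n) (ordered entrywise) is a lattice: any two descending plane partitions with entries at most n have a least upper bound and a greatest lower bound in DPP(n). -/

lemma chain'_iff_getElem?' {α : Type*} {R : α → α → Prop} {l : List α} :
    l.Chain' R ↔ ∀ i a b, l[i]? = some a → l[i + 1]? = some b → R a b := by
  show l.IsChain R ↔ _; rw [List.isChain_iff_getElem]
  constructor
  · intro h i a b ha hb
    obtain ⟨hi1, rfl⟩ := List.getElem?_eq_some_iff.1 hb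
    obtain ⟨hi0, rfl⟩ := List.getElem?_eq_some_iff.1 ha
    simpa using h i (by omega)
  · intro h i hi
    exact h i _ _ (List.getElem?_eq_getElem (by omega)) (List.getElem?_eq_getElem (by omega))

lemma entry?_eq_of_row {π : List (List ℕ)} {r : ℕ} {row : List ℕ}
    (h : π[r]? = some row) (p : ℕ) : entry? π r p = row[p]? := by
  simp [entry?, h]

lemma entry?_eq (π : List (List ℕ)) (r p : ℕ) :
    entry? π r p = (π[r]?.getD [])[p]? := by
  unfold entry?; rcases π[r]? with _ | row <;> simp

/-- index-form characterization of IsDPP with d = 0. -/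
lemma isDPP_iff (n : ℕ) (π : List (List ℕ)) :
    IsDPP 0 n π ↔
      (∀ (r : ℕ) (row : List ℕ), π[r]? = some row → 0 < row.length) ∧
      (∀ r p x : ℕ, entry? π r p = some x → 0 < x ∧ x ≤ n) ∧
      (∀ (r : ℕ) (a b : List ℕ), π[r]? = some a → π[r + 1]? = some b → b.length < a.length) ∧
      (∀ r p x y : ℕ, entry? π r p = some x → entry? π r (p + 1) = some y → y ≤ x) ∧
      (∀ r p x y : ℕ, entry? π (r + 1) p = some x → entry? π r (p + 1) = some y → x < y) ∧
      (∀ (r : ℕ) (row : List ℕ) (x : ℕ), π[r]? = some row → row[0]? = some x → row.length < x) ∧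
      (∀ (r : ℕ) (a : List ℕ) (x : ℕ), π[r]? = some a → entry? π (r + 1) 0 = some x → x ≤ a.length) := by
  constructor
  · rintro ⟨h1, h2, h3, h4, h5, h6, h7⟩
    refine ⟨?_, ?_, ?_, ?_, ?_, ?_, ?_⟩
    · intro r row hr
      exact List.length_pos_iff.2 (h1 row (List.mem_iff_getElem?.2 ⟨r, hr⟩))
    · intro r p x hx
      rcases hrow : π[r]? with _ | row
      · rw [entry?_eq, hrow] at hx; simp at hx
      · rw [entry?_eq_of_row hrow] at hx
        exact h2 row (List.mem_iff_getElem?.2 ⟨r, hrow⟩) x (List.mem_iff_getElem?.2 ⟨p, hx⟩)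
    · intro r a b ha hb
      exact chain'_iff_getElem?'.1 h3 r a b ha hb
    · intro r p x y hx hy
      rcases hrow : π[r]? with _ | row
      · rw [entry?_eq, hrow] at hx; simp at hx
      · rw [entry?_eq_of_row hrow] at hx hy
        exact chain'_iff_getElem?'.1 (h4 row (List.mem_iff_getElem?.2 ⟨r, hrow⟩)) p x y hx hy
    · intro r p x y hx hy
      rcases hrow : π[r]? with _ | a
      · rw [entry?_eq, hrow] at hy; simp at hy
      rcases hrow' : π[r + 1]? with _ | b
      · rw [entry?_eq, hrow'] at hx; simp at hx
      rw [entry?_eq_of_row hrow'] at hx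
      rw [entry?_eq_of_row hrow] at hy
      exact chain'_iff_getElem?'.1 h5 r a b hrow hrow' p x y hx hy
    · intro r row x hr hx
      have := h6 row (List.mem_iff_getElem?.2 ⟨r, hr⟩) x (by rw [List.head?_eq_getElem?]; exact hx)
      omega
    · intro r a x ha hx
      rcases hrow' : π[r + 1]? with _ | b
      · rw [entry?_eq, hrow'] at hx; simp at hx
      rw [entry?_eq_of_row hrow'] at hx
      have hh : b.head? = some x := by rw [List.head?_eq_getElem?]; exact hx
      have := chain'_iff_getElem?'.1 h7 r a b ha hrow' (x : ℤ) (by simp [hh])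
      omega
  · rintro ⟨h1, h2, h3, h4, h5, h6, h7⟩
    refine ⟨?_, ?_, chain'_iff_getElem?'.2 h3, ?_, chain'_iff_getElem?'.2 ?_, ?_,
      chain'_iff_getElem?'.2 ?_⟩
    · intro row hmem
      obtain ⟨r, hr⟩ := List.mem_iff_getElem?.1 hmem
      exact List.length_pos_iff.1 (h1 r row hr)
    · intro row hmem x hx
      obtain ⟨r, hr⟩ := List.mem_iff_getElem?.1 hmem
      obtain ⟨p, hp⟩ := List.mem_iff_getElem?.1 hx
      exact h2 r p x (by rw [entry?_eq_of_row hr]; exact hp)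
    · intro row hmem
      obtain ⟨r, hr⟩ := List.mem_iff_getElem?.1 hmem
      refine chain'_iff_getElem?'.2 fun p x y hx hy => ?_
      exact h4 r p x y (by rw [entry?_eq_of_row hr]; exact hx)
        (by rw [entry?_eq_of_row hr]; exact hy)
    · intro r a b ha hb p x y hx hy
      exact h5 r p x y (by rw [entry?_eq_of_row hb]; exact hx)
        (by rw [entry?_eq_of_row ha]; exact hy)
    · intro row hmem x hx
      obtain ⟨r, hr⟩ := List.mem_iff_getElem?.1 hmem
      rw [List.head?_eq_getElem?] at hx
      have := h6 r row x hr hx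
      omega
    · intro r a b ha hb x hx
      rcases hb0 : b.head? with _ | m
      · simp [hb0] at hx
      · simp only [hb0, Option.bind_eq_bind, Option.bind_some, pure, Option.some.injEq] at hx
        have hm : b[0]? = some m := by rw [← List.head?_eq_getElem?]; exact hb0
        have := h7 r a m ha (by rw [entry?_eq_of_row hb]; exact hm)
        omega

def joinRow (a b : List ℕ) : List ℕ :=
  List.zipWithAll (fun x y => max (x.getD 0) (y.getD 0)) a b

def joinD (π σ : List (List ℕ)) : List (List ℕ) :=
  List.zipWithAll (fun r s => joinRow (r.getD []) (s.getD [])) π σ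

def meetD (π σ : List (List ℕ)) : List (List ℕ) :=
  List.zipWith (List.zipWith min) π σ

lemma length_zipWithAll' {α β γ : Type*} (f : Option α → Option β → γ) :
    ∀ (as : List α) (bs : List β), (List.zipWithAll f as bs).length = max as.length bs.length
  | [], bs => by simp [List.zipWithAll]
  | a :: as, [] => by simp [List.zipWithAll]
  | a :: as, b :: bs => by
    simp [List.zipWithAll, length_zipWithAll' f as bs, Nat.succ_max_succ]

lemma length_joinRow (a b : List ℕ) : (joinRow a b).length = max a.length b.length :=
  length_zipWithAll' ..

lemma length_joinD (π σ : List (List ℕ)) : (joinD π σ).length = max π.length σ.length :=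
  length_zipWithAll' ..

lemma getElem?_joinRow (a b : List ℕ) (p : ℕ) :
    (joinRow a b)[p]? = if a[p]? = none ∧ b[p]? = none then none
      else some (max (a[p]?.getD 0) (b[p]?.getD 0)) := by
  rw [joinRow, List.getElem?_zipWithAll]
  rcases a[p]? with _ | x <;> rcases b[p]? with _ | y <;> simp

lemma getElem?_joinD (π σ : List (List ℕ)) (r : ℕ) :
    (joinD π σ)[r]? = if π[r]? = none ∧ σ[r]? = none then none
      else some (joinRow (π[r]?.getD []) (σ[r]?.getD [])) := by
  rw [joinD, List.getElem?_zipWithAll]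
  rcases π[r]? with _ | x <;> rcases σ[r]? with _ | y <;> simp

lemma entry?_joinD (π σ : List (List ℕ)) (r p : ℕ) :
    entry? (joinD π σ) r p = if entry? π r p = none ∧ entry? σ r p = none then none
      else some (max ((entry? π r p).getD 0) ((entry? σ r p).getD 0)) := by
  rw [entry?_eq, entry?_eq π, entry?_eq σ, getElem?_joinD]
  by_cases h : π[r]? = none ∧ σ[r]? = none
  · rcases h with ⟨h1, h2⟩; simp [h1, h2]
  · rw [if_neg h]
    simp only [Option.getD_some]
    rw [getElem?_joinRow]

lemma getElem?_meetD (π σ : List (List ℕ)) (r : ℕ) :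
    (meetD π σ)[r]? = match π[r]?, σ[r]? with
      | some a, some b => some (List.zipWith min a b)
      | _, _ => none := by
  rw [meetD, List.getElem?_zipWith]
  rcases π[r]? with _ | a <;> rcases σ[r]? with _ | b <;> rfl

lemma entry?_meetD (π σ : List (List ℕ)) (r p : ℕ) :
    entry? (meetD π σ) r p = match entry? π r p, entry? σ r p with
      | some x, some y => some (min x y)
      | _, _ => none := by
  rw [entry?_eq, entry?_eq π, entry?_eq σ, getElem?_meetD]
  rcases π[r]? with _ | a <;> rcases σ[r]? with _ | b
  · simp
  · simp
  · simp
  · simp only [Option.getD_some]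
    rw [List.getElem?_zipWith]
    rcases a[p]? with _ | x <;> rcases b[p]? with _ | y <;> rfl

lemma entry?_none_of_row_none {π : List (List ℕ)} {r : ℕ} (h : π[r]? = none) (p : ℕ) :
    entry? π r p = none := by simp [entry?, h]

lemma row_above {n : ℕ} {π : List (List ℕ)} (h : IsDPP 0 n π) {r : ℕ} {b : List ℕ}
    (hb : π[r + 1]? = some b) : ∃ a, π[r]? = some a ∧ b.length < a.length := by
  obtain ⟨-, -, h3, -, -, -, -⟩ := (isDPP_iff n π).1 h
  have hr : r < π.length := by have := (List.getElem?_eq_some_iff.1 hb).1; omega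
  exact ⟨π[r], List.getElem?_eq_getElem hr,
    h3 r _ _ (List.getElem?_eq_getElem hr) hb⟩

lemma entry?_left {n : ℕ} {π : List (List ℕ)} (h : IsDPP 0 n π) {r p y : ℕ}
    (hy : entry? π r (p + 1) = some y) : ∃ x, entry? π r p = some x ∧ y ≤ x := by
  obtain ⟨-, -, -, h4, -, -, -⟩ := (isDPP_iff n π).1 h
  rcases hrow : π[r]? with _ | row
  · rw [entry?_eq, hrow] at hy; simp at hy
  rw [entry?_eq_of_row hrow] at hy
  have hlen := (List.getElem?_eq_some_iff.1 hy).1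
  have hx : entry? π r p = some (row[p]'(by omega)) := by
    rw [entry?_eq_of_row hrow]; exact List.getElem?_eq_getElem (by omega)
  exact ⟨_, hx, h4 r p _ y hx (by rw [entry?_eq_of_row hrow]; exact hy)⟩

lemma entry?_above {n : ℕ} {π : List (List ℕ)} (h : IsDPP 0 n π) {r p x : ℕ}
    (hx : entry? π (r + 1) p = some x) : ∃ y, entry? π r (p + 1) = some y ∧ x < y := by
  obtain ⟨-, -, -, -, h5, -, -⟩ := (isDPP_iff n π).1 h
  rcases hrow1 : π[r + 1]? with _ | row1
  · rw [entry?_eq, hrow1] at hx; simp at hx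
  obtain ⟨row0, hrow0, hlen⟩ := row_above h hrow1
  rw [entry?_eq_of_row hrow1] at hx
  have hp := (List.getElem?_eq_some_iff.1 hx).1
  have hy : entry? π r (p + 1) = some (row0[p + 1]'(by omega)) := by
    rw [entry?_eq_of_row hrow0]; exact List.getElem?_eq_getElem (by omega)
  exact ⟨_, hy, h5 r p x _ (by rw [entry?_eq_of_row hrow1]; exact hx) hy⟩

lemma isDPP_joinD {n : ℕ} {π σ : List (List ℕ)} (hπ : IsDPP 0 n π) (hσ : IsDPP 0 n σ) :
    IsDPP 0 n (joinD π σ) := by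
  obtain ⟨p1, p2, p3, p4, p5, p6, p7⟩ := (isDPP_iff n π).1 hπ
  obtain ⟨q1, q2, q3, q4, q5, q6, q7⟩ := (isDPP_iff n σ).1 hσ
  rw [isDPP_iff]
  refine ⟨?_, ?_, ?_, ?_, ?_, ?_, ?_⟩
  · -- rows nonempty
    intro r row hr
    rw [getElem?_joinD] at hr
    rcases hA : π[r]? with _ | a <;> rcases hB : σ[r]? with _ | b <;>
        rw [hA, hB] at hr <;> simp at hr <;> subst hr <;> rw [length_joinRow] <;> simp
    · exact q1 r b hB
    · exact p1 r a hA
    · exact Or.inl (p1 r a hA)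
  · -- entries positive and ≤ n
    intro r p x hx
    rw [entry?_joinD] at hx
    rcases hA : entry? π r p with _ | u <;> rcases hB : entry? σ r p with _ | v <;>
        rw [hA, hB] at hx <;> simp at hx
    · have := q2 r p v hB; omega
    · have := p2 r p u hA; omega
    · have h1 := p2 r p u hA; have h2 := q2 r p v hB; omega
  · -- row lengths strictly decreasing
    intro r a b ha hb
    rw [getElem?_joinD] at ha hb
    rcases hA : π[r + 1]? with _ | a1 <;> rcases hB : σ[r + 1]? with _ | b1 <;>
        rw [hA, hB] at hb <;> simp at hb
    · -- only σ has row r+1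
      obtain ⟨b0, hb0, hlb⟩ := row_above hσ hB
      rw [hb0] at ha
      have h0 : ¬ (π[r]? = none ∧ (some b0 : Option (List ℕ)) = none) := by simp
      rw [if_neg h0] at ha
      obtain rfl := Option.some.inj ha
      subst hb
      rw [length_joinRow, length_joinRow]
      simp [hb0]
      rcases hA0 : π[r]? with _ | a0 <;> simp <;> omega
    · -- only π has row r+1
      obtain ⟨a0, ha0, hla⟩ := row_above hπ hA
      rw [ha0] at ha
      have h0 : ¬ ((some a0 : Option (List ℕ)) = none ∧ σ[r]? = none) := by simp
      rw [if_neg h0] at ha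
      obtain rfl := Option.some.inj ha
      subst hb
      rw [length_joinRow, length_joinRow]
      simp
      rcases hB0 : σ[r]? with _ | b0 <;> simp <;> omega
    · -- both
      obtain ⟨a0, ha0, hla⟩ := row_above hπ hA
      obtain ⟨b0, hb0, hlb⟩ := row_above hσ hB
      rw [ha0, hb0] at ha
      have h0 : ¬ ((some a0 : Option (List ℕ)) = none ∧ (some b0 : Option (List ℕ)) = none) := by
        simp
      rw [if_neg h0] at ha
      obtain rfl := Option.some.inj ha
      subst hb
      rw [length_joinRow, length_joinRow]
      simp
      omega
  · -- rows weakly decreasing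
    intro r p x y hx hy
    rw [entry?_joinD] at hx hy
    rcases hA : entry? π r (p + 1) with _ | yπ <;> rcases hB : entry? σ r (p + 1) with _ | yσ <;>
        rw [hA, hB] at hy <;> simp at hy
    · obtain ⟨xσ, hxσ, hle⟩ := entry?_left hσ hB
      rw [hxσ] at hx
      rcases hA0 : entry? π r p with _ | xπ <;> rw [hA0] at hx <;> simp at hx <;> omega
    · obtain ⟨xπ, hxπ, hle⟩ := entry?_left hπ hA
      rw [hxπ] at hx
      rcases hB0 : entry? σ r p with _ | xσ <;> rw [hB0] at hx <;> simp at hx <;> omega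
    · obtain ⟨xπ, hxπ, hleπ⟩ := entry?_left hπ hA
      obtain ⟨xσ, hxσ, hleσ⟩ := entry?_left hσ hB
      rw [hxπ, hxσ] at hx
      simp at hx
      omega
  · -- columns strictly decreasing
    intro r p x y hx hy
    rw [entry?_joinD] at hx hy
    rcases hA : entry? π (r + 1) p with _ | xπ <;> rcases hB : entry? σ (r + 1) p with _ | xσ <;>
        rw [hA, hB] at hx <;> simp at hx
    · obtain ⟨yσ, hyσ, hlt⟩ := entry?_above hσ hB
      rw [hyσ] at hy
      rcases hA0 : entry? π r (p + 1) with _ | yπ <;> rw [hA0] at hy <;> simp at hy <;> omega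
    · obtain ⟨yπ, hyπ, hlt⟩ := entry?_above hπ hA
      rw [hyπ] at hy
      rcases hB0 : entry? σ r (p + 1) with _ | yσ <;> rw [hB0] at hy <;> simp at hy <;> omega
    · obtain ⟨yπ, hyπ, hltπ⟩ := entry?_above hπ hA
      obtain ⟨yσ, hyσ, hltσ⟩ := entry?_above hσ hB
      rw [hyπ, hyσ] at hy
      simp at hy
      omega
  · -- first entry greater than row length
    intro r row x hr hx
    rw [getElem?_joinD] at hr
    rcases hA : π[r]? with _ | a <;> rcases hB : σ[r]? with _ | b <;>
        rw [hA, hB] at hr <;> simp at hr <;> subst hr <;>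
      rw [getElem?_joinRow] at hx <;> rw [length_joinRow]
    · -- only σ
      rcases hb0 : b[0]? with _ | b0 <;> rw [hb0] at hx <;> simp at hx
      have := q6 r b b0 hB hb0
      simp
      omega
    · -- only π
      rcases ha0 : a[0]? with _ | a0 <;> rw [ha0] at hx <;> simp at hx
      have := p6 r a a0 hA ha0
      simp
      omega
    · -- both
      have hal : 0 < a.length := p1 r a hA
      have hbl : 0 < b.length := q1 r b hB
      have ha0 : a[0]? = some (a[0]'(by omega)) := List.getElem?_eq_getElem (by omega)
      have hb0 : b[0]? = some (b[0]'(by omega)) := List.getElem?_eq_getElem (by omega)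
      rw [ha0, hb0] at hx
      simp at hx
      have h1 := p6 r a _ hA ha0
      have h2 := q6 r b _ hB hb0
      simp
      omega
  · -- first entry of next row at most previous row length
    intro r a x ha hx
    rw [getElem?_joinD] at ha
    rw [entry?_joinD] at hx
    rcases hA : entry? π (r + 1) 0 with _ | xπ <;> rcases hB : entry? σ (r + 1) 0 with _ | xσ <;>
        rw [hA, hB] at hx <;> simp at hx
    · -- only σ
      rcases hrow1 : σ[r + 1]? with _ | b1
      · rw [entry?_eq, hrow1] at hB; simp at hB
      obtain ⟨b0, hb0, -⟩ := row_above hσ hrow1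
      have hxb := q7 r b0 xσ hb0 hB
      rw [hb0] at ha
      have h0 : ¬ (π[r]? = none ∧ (some b0 : Option (List ℕ)) = none) := by simp
      rw [if_neg h0] at ha
      obtain rfl := Option.some.inj ha
      rw [length_joinRow]
      simp [hb0]
      omega
    · -- only π
      rcases hrow1 : π[r + 1]? with _ | a1
      · rw [entry?_eq, hrow1] at hA; simp at hA
      obtain ⟨a0, ha0, -⟩ := row_above hπ hrow1
      have hxa := p7 r a0 xπ ha0 hA
      rw [ha0] at ha
      have h0 : ¬ ((some a0 : Option (List ℕ)) = none ∧ σ[r]? = none) := by simp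
      rw [if_neg h0] at ha
      obtain rfl := Option.some.inj ha
      rw [length_joinRow]
      simp
      omega
    · -- both
      rcases hrow1 : π[r + 1]? with _ | a1
      · rw [entry?_eq, hrow1] at hA; simp at hA
      rcases hrow1' : σ[r + 1]? with _ | b1
      · rw [entry?_eq, hrow1'] at hB; simp at hB
      obtain ⟨a0, ha0, -⟩ := row_above hπ hrow1
      obtain ⟨b0, hb0, -⟩ := row_above hσ hrow1'
      have hxa := p7 r a0 xπ ha0 hA
      have hxb := q7 r b0 xσ hb0 hB
      rw [ha0, hb0] at ha
      have h0 : ¬ ((some a0 : Option (List ℕ)) = none ∧ (some b0 : Option (List ℕ)) = none) := by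
        simp
      rw [if_neg h0] at ha
      obtain rfl := Option.some.inj ha
      rw [length_joinRow]
      simp
      omega

lemma le_joinD_left (π σ : List (List ℕ)) : dppLe π (joinD π σ) := by
  intro r p x hx
  rw [entry?_joinD, hx]
  rcases hB : entry? σ r p with _ | v <;> simp

lemma le_joinD_right (π σ : List (List ℕ)) : dppLe σ (joinD π σ) := by
  intro r p x hx
  rw [entry?_joinD, hx]
  rcases hA : entry? π r p with _ | u <;> simp

lemma joinD_le {π σ ρ : List (List ℕ)} (h1 : dppLe π ρ) (h2 : dppLe σ ρ) :
    dppLe (joinD π σ) ρ := by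
  intro r p x hx
  rw [entry?_joinD] at hx
  rcases hA : entry? π r p with _ | u <;> rcases hB : entry? σ r p with _ | v <;>
      rw [hA, hB] at hx <;> simp at hx
  · obtain ⟨w, hw, hvw⟩ := h2 r p v hB
    exact ⟨w, hw, by omega⟩
  · obtain ⟨w, hw, huw⟩ := h1 r p u hA
    exact ⟨w, hw, by omega⟩
  · obtain ⟨w, hw, huw⟩ := h1 r p u hA
    obtain ⟨w', hw', hvw'⟩ := h2 r p v hB
    rw [hw] at hw'
    obtain rfl := Option.some.inj hw'
    exact ⟨w, hw, by omega⟩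

lemma isDPP_meetD {n : ℕ} {π σ : List (List ℕ)} (hπ : IsDPP 0 n π) (hσ : IsDPP 0 n σ) :
    IsDPP 0 n (meetD π σ) := by
  obtain ⟨p1, p2, p3, p4, p5, p6, p7⟩ := (isDPP_iff n π).1 hπ
  obtain ⟨q1, q2, q3, q4, q5, q6, q7⟩ := (isDPP_iff n σ).1 hσ
  rw [isDPP_iff]
  refine ⟨?_, ?_, ?_, ?_, ?_, ?_, ?_⟩
  · -- rows nonempty
    intro r row hr
    rw [getElem?_meetD] at hr
    rcases hA : π[r]? with _ | a <;> rcases hB : σ[r]? with _ | b <;>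
        rw [hA, hB] at hr <;> simp at hr
    subst hr
    rw [List.length_zipWith]
    have := p1 r a hA; have := q1 r b hB
    simp; omega
  · -- entries positive and ≤ n
    intro r p x hx
    rw [entry?_meetD] at hx
    rcases hA : entry? π r p with _ | u <;> rcases hB : entry? σ r p with _ | v <;>
        rw [hA, hB] at hx <;> simp at hx
    have := p2 r p u hA; have := q2 r p v hB
    omega
  · -- lengths strictly decreasing
    intro r a b ha hb
    rw [getElem?_meetD] at ha hb
    rcases hA : π[r + 1]? with _ | a1 <;> rcases hB : σ[r + 1]? with _ | b1 <;>
        rw [hA, hB] at hb <;> simp at hb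
    obtain ⟨a0, ha0, hla⟩ := row_above hπ hA
    obtain ⟨b0, hb0, hlb⟩ := row_above hσ hB
    rw [ha0, hb0] at ha
    simp at ha
    subst ha; subst hb
    rw [List.length_zipWith, List.length_zipWith]
    simp; omega
  · -- rows weakly decreasing
    intro r p x y hx hy
    rw [entry?_meetD] at hx hy
    rcases hA : entry? π r (p + 1) with _ | yπ <;> rcases hB : entry? σ r (p + 1) with _ | yσ <;>
        rw [hA, hB] at hy <;> simp at hy
    obtain ⟨xπ, hxπ, hleπ⟩ := entry?_left hπ hA
    obtain ⟨xσ, hxσ, hleσ⟩ := entry?_left hσ hB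
    rw [hxπ, hxσ] at hx
    simp at hx
    omega
  · -- columns strictly decreasing
    intro r p x y hx hy
    rw [entry?_meetD] at hx hy
    rcases hA : entry? π (r + 1) p with _ | xπ <;> rcases hB : entry? σ (r + 1) p with _ | xσ <;>
        rw [hA, hB] at hx <;> simp at hx
    obtain ⟨yπ, hyπ, hltπ⟩ := entry?_above hπ hA
    obtain ⟨yσ, hyσ, hltσ⟩ := entry?_above hσ hB
    rw [hyπ, hyσ] at hy
    simp at hy
    omega
  · -- first entry greater than row length
    intro r row x hr hx
    rw [getElem?_meetD] at hr
    rcases hA : π[r]? with _ | a <;> rcases hB : σ[r]? with _ | b <;>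
        rw [hA, hB] at hr <;> simp at hr
    subst hr
    have hal : 0 < a.length := p1 r a hA
    have hbl : 0 < b.length := q1 r b hB
    have ha0 : a[0]? = some (a[0]'(by omega)) := List.getElem?_eq_getElem (by omega)
    have hb0 : b[0]? = some (b[0]'(by omega)) := List.getElem?_eq_getElem (by omega)
    rw [List.getElem?_zipWith, ha0, hb0] at hx
    simp at hx
    have h1 := p6 r a _ hA ha0
    have h2 := q6 r b _ hB hb0
    rw [List.length_zipWith]
    simp; omega
  · -- first entry of next row at most previous row length
    intro r a x ha hx
    rw [getElem?_meetD] at ha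
    rw [entry?_meetD] at hx
    rcases hA : entry? π (r + 1) 0 with _ | xπ <;> rcases hB : entry? σ (r + 1) 0 with _ | xσ <;>
        rw [hA, hB] at hx <;> simp at hx
    rcases hrow1 : π[r + 1]? with _ | a1
    · rw [entry?_eq, hrow1] at hA; simp at hA
    rcases hrow1' : σ[r + 1]? with _ | b1
    · rw [entry?_eq, hrow1'] at hB; simp at hB
    obtain ⟨a0, ha0, -⟩ := row_above hπ hrow1
    obtain ⟨b0, hb0, -⟩ := row_above hσ hrow1'
    have hxa := p7 r a0 xπ ha0 hA
    have hxb := q7 r b0 xσ hb0 hB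
    rw [ha0, hb0] at ha
    simp at ha
    subst ha
    rw [List.length_zipWith]
    simp; omega

lemma meetD_le_left (π σ : List (List ℕ)) : dppLe (meetD π σ) π := by
  intro r p x hx
  rw [entry?_meetD] at hx
  rcases hA : entry? π r p with _ | u <;> rcases hB : entry? σ r p with _ | v <;>
      rw [hA, hB] at hx <;> simp at hx
  exact ⟨u, rfl, by omega⟩

lemma meetD_le_right (π σ : List (List ℕ)) : dppLe (meetD π σ) σ := by
  intro r p x hx
  rw [entry?_meetD] at hx
  rcases hA : entry? π r p with _ | u <;> rcases hB : entry? σ r p with _ | v <;>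
      rw [hA, hB] at hx <;> simp at hx
  exact ⟨v, rfl, by omega⟩

lemma le_meetD {π σ ρ : List (List ℕ)} (h1 : dppLe ρ π) (h2 : dppLe ρ σ) :
    dppLe ρ (meetD π σ) := by
  intro r p x hx
  obtain ⟨u, hu, hxu⟩ := h1 r p x hx
  obtain ⟨v, hv, hxv⟩ := h2 r p x hx
  rw [entry?_meetD, hu, hv]
  exact ⟨min u v, rfl, by omega⟩

/-- `DPP(n)` with the entrywise order is a lattice: any two descending plane partitions
with entries at most `n` have a least upper bound and a greatest lower bound in `DPP(n)`. -/
theorem stmt5 (n : ℕ) (hn : 0 < n) (π σ : List (List ℕ))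
    (hπ : IsDPP 0 n π) (hσ : IsDPP 0 n σ) :
    (∃ μ, IsDPP 0 n μ ∧ dppLe π μ ∧ dppLe σ μ ∧
        ∀ ρ, IsDPP 0 n ρ → dppLe π ρ → dppLe σ ρ → dppLe μ ρ) ∧
    (∃ ν, IsDPP 0 n ν ∧ dppLe ν π ∧ dppLe ν σ ∧
        ∀ ρ, IsDPP 0 n ρ → dppLe ρ π → dppLe ρ σ → dppLe ρ ν) :=
  ⟨⟨joinD π σ, isDPP_joinD hπ hσ, le_joinD_left π σ, le_joinD_right π σ,
      fun _ _ h1 h2 => joinD_le h1 h2⟩,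
   ⟨meetD π σ, isDPP_meetD hπ hσ, meetD_le_left π σ, meetD_le_right π σ,
      fun _ _ h1 h2 => le_meetD h1 h2⟩⟩
end

section
/- For every integer d \le 1 and every positive integer n, the poset d-DPP(n) of d-descending plane partitions with entries at most n, ordered entrywise, is a lattice: any two such arrays have a least upper bound and a greatest lower bound in d-DPP(n). -/
namespace DPPAux

def ojoin {α : Type*} (f : α → α → α) : Option α → Option α → Option α
  | none, o => o
  | some x, none => some x
  | some x, some y => some (f x y)

@[simp] lemma ojoin_none_left {α : Type*} (f : α → α → α) (o : Option α) :
    ojoin f none o = o := by cases o <;> rfl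

@[simp] lemma ojoin_none_right {α : Type*} (f : α → α → α) (o : Option α) :
    ojoin f o none = o := by cases o <;> rfl

@[simp] lemma ojoin_some_some {α : Type*} (f : α → α → α) (x y : α) :
    ojoin f (some x) (some y) = some (f x y) := rfl

lemma ojoin_eq_some {α : Type*} {f : α → α → α} {o₁ o₂ : Option α} {c : α}
    (h : ojoin f o₁ o₂ = some c) :
    (o₁ = some c ∧ o₂ = none) ∨ (o₁ = none ∧ o₂ = some c) ∨
      (∃ x y, o₁ = some x ∧ o₂ = some y ∧ c = f x y) := by
  cases o₁ <;> cases o₂ <;> simp_all [ojoin]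

def zjoin {α : Type*} (f : α → α → α) : List α → List α → List α
  | [], b => b
  | a, [] => a
  | x :: a, y :: b => f x y :: zjoin f a b

lemma zjoin_getElem? {α : Type*} (f : α → α → α) :
    ∀ (a b : List α) (p : ℕ), (zjoin f a b)[p]? = ojoin f a[p]? b[p]?
  | [], b, p => by simp [zjoin]
  | x :: a, [], p => by simp [zjoin]
  | x :: a, y :: b, 0 => by simp [zjoin]
  | x :: a, y :: b, p + 1 => by
      simpa [zjoin] using zjoin_getElem? f a b p

lemma zjoin_length {α : Type*} (f : α → α → α) :
    ∀ (a b : List α), (zjoin f a b).length = max a.length b.length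
  | [], b => by simp [zjoin]
  | x :: a, [] => by simp [zjoin]
  | x :: a, y :: b => by
      simp only [zjoin, List.length_cons, zjoin_length f a b]
      omega

lemma chain'_iff_getElem? {α : Type*} {R : α → α → Prop} {l : List α} :
    l.Chain' R ↔ ∀ (i : ℕ) (x y : α), l[i]? = some x → l[i+1]? = some y → R x y := by
  rw [List.Chain', List.isChain_iff_getElem]
  constructor
  · intro h i x y hx hy
    rw [List.getElem?_eq_some_iff] at hx hy
    obtain ⟨hi, rfl⟩ := hx
    obtain ⟨hj, rfl⟩ := hy
    simpa using h i (by omega)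
  · intro h i hi
    have h1 : i < l.length := by omega
    have h2 : i + 1 < l.length := by omega
    simpa using h i l[i] l[i+1] (List.getElem?_eq_some_iff.2 ⟨h1, rfl⟩)
      (List.getElem?_eq_some_iff.2 ⟨h2, rfl⟩)

lemma exists_prev {α : Type*} {l : List α} {i : ℕ} {b : α} (h : l[i+1]? = some b) :
    ∃ a, l[i]? = some a := by
  obtain ⟨h', -⟩ := List.getElem?_eq_some_iff.1 h
  exact ⟨l[i]'(by omega), List.getElem?_eq_some_iff.2 ⟨by omega, rfl⟩⟩

lemma exists_getElem?_of_le {α : Type*} {l : List α} {i j : ℕ} {b : α} (hij : i ≤ j)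
    (h : l[j]? = some b) : ∃ a, l[i]? = some a := by
  obtain ⟨h', -⟩ := List.getElem?_eq_some_iff.1 h
  exact ⟨l[i]'(by omega), List.getElem?_eq_some_iff.2 ⟨by omega, rfl⟩⟩

lemma zipWith_getElem?' {α β γ : Type*} (f : α → β → γ) (a : List α) (b : List β) (i : ℕ) :
    (List.zipWith f a b)[i]? = a[i]?.bind fun x => b[i]?.map fun y => f x y := by
  rw [List.getElem?_zipWith]
  cases a[i]? <;> cases b[i]? <;> rfl

lemma bind_map_eq_some {α β γ : Type*} {o₁ : Option α} {o₂ : Option β} {f : α → β → γ} {c : γ}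
    (h : (o₁.bind fun x => o₂.map fun y => f x y) = some c) :
    ∃ x y, o₁ = some x ∧ o₂ = some y ∧ c = f x y := by
  cases o₁ <;> cases o₂ <;> simp_all

def dppJoin (π σ : List (List ℕ)) : List (List ℕ) := zjoin (zjoin max) π σ

def dppMeet (π σ : List (List ℕ)) : List (List ℕ) := List.zipWith (List.zipWith min) π σ

lemma dppJoin_getElem? (π σ : List (List ℕ)) (i : ℕ) :
    (dppJoin π σ)[i]? = ojoin (zjoin max) π[i]? σ[i]? := zjoin_getElem? _ π σ i

lemma dppMeet_getElem? (π σ : List (List ℕ)) (i : ℕ) :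
    (dppMeet π σ)[i]? = π[i]?.bind fun a => σ[i]?.map fun b => List.zipWith min a b :=
  zipWith_getElem?' _ π σ i

lemma entry?_join (π σ : List (List ℕ)) (r p : ℕ) :
    entry? (dppJoin π σ) r p = ojoin max (entry? π r p) (entry? σ r p) := by
  unfold entry?
  rw [dppJoin_getElem?]
  cases hπ : π[r]? <;> cases hσ : σ[r]? <;>
    simp [zjoin_getElem?]

lemma entry?_meet (π σ : List (List ℕ)) (r p : ℕ) :
    entry? (dppMeet π σ) r p =
      (entry? π r p).bind fun x => (entry? σ r p).map fun y => min x y := by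
  unfold entry?
  rw [dppMeet_getElem?]
  cases hπ : π[r]? <;> cases hσ : σ[r]? <;>
    simp [zipWith_getElem?']

section IndexForm

variable {d : ℤ} {n : ℕ} {π : List (List ℕ)}

lemma idx_pos (h : IsDPP d n π) : ∀ (i : ℕ) (a : List ℕ), π[i]? = some a → 0 < a.length :=
  fun _ a ha => List.length_pos_iff.2 (h.1 a (List.mem_of_getElem? ha))

lemma idx_bd (h : IsDPP d n π) :
    ∀ (i : ℕ) (a : List ℕ) (p x : ℕ), π[i]? = some a → a[p]? = some x → 0 < x ∧ x ≤ n :=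
  fun _ a _ x ha hx => h.2.1 a (List.mem_of_getElem? ha) x (List.mem_of_getElem? hx)

lemma idx_len (h : IsDPP d n π) :
    ∀ (i : ℕ) (a b : List ℕ), π[i]? = some a → π[i+1]? = some b → b.length < a.length :=
  fun i a b => chain'_iff_getElem?.1 h.2.2.1 i a b

lemma idx_row (h : IsDPP d n π) :
    ∀ (i : ℕ) (a : List ℕ) (p x y : ℕ), π[i]? = some a → a[p]? = some x → a[p+1]? = some y → y ≤ x :=
  fun _ a p x y ha => chain'_iff_getElem?.1 (h.2.2.2.1 a (List.mem_of_getElem? ha)) p x y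

lemma idx_col (h : IsDPP d n π) :
    ∀ (i : ℕ) (a b : List ℕ) (p x y : ℕ), π[i]? = some a → π[i+1]? = some b →
      b[p]? = some x → a[p+1]? = some y → x < y :=
  fun i a b p x y ha hb hx hy => chain'_iff_getElem?.1 h.2.2.2.2.1 i a b ha hb p x y hx hy

lemma idx_hd1 (h : IsDPP d n π) :
    ∀ (i : ℕ) (a : List ℕ) (x : ℕ), π[i]? = some a → a[0]? = some x → (a.length : ℤ) - d < (x : ℤ) := by
  intro i a x ha hx
  exact h.2.2.2.2.2.1 a (List.mem_of_getElem? ha) x (by rw [List.head?_eq_getElem?]; exact hx)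

lemma idx_hd2 (h : IsDPP d n π) :
    ∀ (i : ℕ) (a b : List ℕ) (x : ℕ), π[i]? = some a → π[i+1]? = some b → b[0]? = some x →
      (x : ℤ) ≤ (a.length : ℤ) - d := by
  intro i a b x ha hb hx
  exact chain'_iff_getElem?.1 h.2.2.2.2.2.2 i a b ha hb (x : ℤ)
    (by rw [List.head?_eq_getElem?, hx]; rfl)

lemma col_up (h : IsDPP d n π) {i p x : ℕ} {b : List ℕ}
    (hb : π[i+1]? = some b) (hx : b[p]? = some x) :
    ∃ a y, π[i]? = some a ∧ a[p+1]? = some y ∧ x < y := by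
  obtain ⟨a, ha⟩ := exists_prev hb
  have hlen := idx_len h i a b ha hb
  obtain ⟨hpb, -⟩ := List.getElem?_eq_some_iff.1 hx
  have hp1 : p + 1 < a.length := by omega
  have hy : a[p+1]? = some (a[p+1]'hp1) := List.getElem?_eq_some_iff.2 ⟨hp1, rfl⟩
  exact ⟨a, _, ha, hy, idx_col h i a b p x _ ha hb hx hy⟩

lemma hd_up (h : IsDPP d n π) {i x : ℕ} {b : List ℕ}
    (hb : π[i+1]? = some b) (hx : b[0]? = some x) :
    ∃ a, π[i]? = some a ∧ (x : ℤ) ≤ (a.length : ℤ) - d := by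
  obtain ⟨a, ha⟩ := exists_prev hb
  exact ⟨a, ha, idx_hd2 h i a b x ha hb hx⟩

lemma isDPP_mk
    (h1 : ∀ (i : ℕ) (a : List ℕ), π[i]? = some a → 0 < a.length)
    (h2 : ∀ (i : ℕ) (a : List ℕ) (p x : ℕ), π[i]? = some a → a[p]? = some x → 0 < x ∧ x ≤ n)
    (h3 : ∀ (i : ℕ) (a b : List ℕ), π[i]? = some a → π[i+1]? = some b → b.length < a.length)
    (h4 : ∀ (i : ℕ) (a : List ℕ) (p x y : ℕ), π[i]? = some a → a[p]? = some x → a[p+1]? = some y → y ≤ x)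
    (h5 : ∀ (i : ℕ) (a b : List ℕ) (p x y : ℕ), π[i]? = some a → π[i+1]? = some b →
      b[p]? = some x → a[p+1]? = some y → x < y)
    (h6 : ∀ (i : ℕ) (a : List ℕ) (x : ℕ), π[i]? = some a → a[0]? = some x → (a.length : ℤ) - d < (x : ℤ))
    (h7 : ∀ (i : ℕ) (a b : List ℕ) (x : ℕ), π[i]? = some a → π[i+1]? = some b → b[0]? = some x →
      (x : ℤ) ≤ (a.length : ℤ) - d) :
    IsDPP d n π := by
  refine ⟨?_, ?_, ?_, ?_, ?_, ?_, ?_⟩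
  · intro row hrow
    obtain ⟨i, hi⟩ := List.mem_iff_getElem?.1 hrow
    exact List.ne_nil_of_length_pos (h1 i row hi)
  · intro row hrow x hx
    obtain ⟨i, hi⟩ := List.mem_iff_getElem?.1 hrow
    obtain ⟨p, hp⟩ := List.mem_iff_getElem?.1 hx
    exact h2 i row p x hi hp
  · exact chain'_iff_getElem?.2 fun i a b => h3 i a b
  · intro row hrow
    obtain ⟨i, hi⟩ := List.mem_iff_getElem?.1 hrow
    exact chain'_iff_getElem?.2 fun p x y => h4 i row p x y hi
  · exact chain'_iff_getElem?.2 fun i a b ha hb p x y hx hy => h5 i a b p x y ha hb hx hy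
  · intro row hrow x hx
    obtain ⟨i, hi⟩ := List.mem_iff_getElem?.1 hrow
    rw [List.head?_eq_getElem?] at hx
    exact h6 i row x hi hx
  · refine chain'_iff_getElem?.2 fun i a b ha hb x hx => ?_
    rw [List.head?_eq_getElem?] at hx
    cases hb0 : b[0]? with
    | none => rw [hb0] at hx; simp at hx
    | some u =>
        rw [hb0] at hx
        obtain rfl : ((u : ℕ) : ℤ) = x := by simpa using hx
        exact h7 i a b u ha hb hb0

end IndexForm

lemma le_of_ojoin_left {u x : ℕ} {o : Option ℕ} (h : ojoin max (some u) o = some x) :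
    u ≤ x := by
  cases o <;> simp_all [ojoin] <;> omega

lemma le_of_ojoin_right {v x : ℕ} {o : Option ℕ} (h : ojoin max o (some v) = some x) :
    v ≤ x := by
  cases o <;> simp_all [ojoin] <;> omega

lemma join_len_ge_left {π σ : List (List ℕ)} {i : ℕ} {a aπ : List ℕ}
    (ha : (dppJoin π σ)[i]? = some a) (hπi : π[i]? = some aπ) : aπ.length ≤ a.length := by
  rw [dppJoin_getElem?, hπi] at ha
  cases hσi : σ[i]? <;> rw [hσi] at ha
  · simp_all
  · obtain rfl := Option.some.inj ha
    rw [zjoin_length]; omega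

lemma join_len_ge_right {π σ : List (List ℕ)} {i : ℕ} {a aσ : List ℕ}
    (ha : (dppJoin π σ)[i]? = some a) (hσi : σ[i]? = some aσ) : aσ.length ≤ a.length := by
  rw [dppJoin_getElem?, hσi] at ha
  cases hπi : π[i]? <;> rw [hπi] at ha
  · simp_all
  · obtain rfl := Option.some.inj ha
    rw [zjoin_length]; omega

lemma join_entry_ge_left {π σ : List (List ℕ)} {i p : ℕ} {a aπ : List ℕ} {u y : ℕ}
    (ha : (dppJoin π σ)[i]? = some a) (hπi : π[i]? = some aπ)
    (hu : aπ[p]? = some u) (hy : a[p]? = some y) : u ≤ y := by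
  rw [dppJoin_getElem?, hπi] at ha
  cases hσi : σ[i]? <;> rw [hσi] at ha
  · obtain rfl := Option.some.inj ha
    rw [hu] at hy; exact le_of_eq (Option.some.inj hy)
  · obtain rfl := Option.some.inj ha
    rw [zjoin_getElem?, hu] at hy
    exact le_of_ojoin_left hy

lemma join_entry_ge_right {π σ : List (List ℕ)} {i p : ℕ} {a aσ : List ℕ} {v y : ℕ}
    (ha : (dppJoin π σ)[i]? = some a) (hσi : σ[i]? = some aσ)
    (hv : aσ[p]? = some v) (hy : a[p]? = some y) : v ≤ y := by
  rw [dppJoin_getElem?, hσi] at ha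
  cases hπi : π[i]? <;> rw [hπi] at ha
  · obtain rfl := Option.some.inj ha
    rw [hv] at hy; exact le_of_eq (Option.some.inj hy)
  · obtain rfl := Option.some.inj ha
    rw [zjoin_getElem?, hv] at hy
    exact le_of_ojoin_right hy

variable {d : ℤ} {n : ℕ} {π σ : List (List ℕ)}

lemma isDPP_join (hπ : IsDPP d n π) (hσ : IsDPP d n σ) : IsDPP d n (dppJoin π σ) := by
  apply isDPP_mk
  · -- nonempty rows
    intro i a ha
    rw [dppJoin_getElem?] at ha
    rcases ojoin_eq_some ha with ⟨h, -⟩ | ⟨-, h⟩ | ⟨x, y, hx, hy, rfl⟩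
    · exact idx_pos hπ i a h
    · exact idx_pos hσ i a h
    · rw [zjoin_length]
      have := idx_pos hπ i x hx
      omega
  · -- bounds
    intro i a p x ha hx
    rw [dppJoin_getElem?] at ha
    rcases ojoin_eq_some ha with ⟨h, -⟩ | ⟨-, h⟩ | ⟨aπ, aσ, hπi, hσi, rfl⟩
    · exact idx_bd hπ i a p x h hx
    · exact idx_bd hσ i a p x h hx
    · rw [zjoin_getElem?] at hx
      rcases ojoin_eq_some hx with ⟨h, -⟩ | ⟨-, h⟩ | ⟨u, v, hu, hv, rfl⟩
      · exact idx_bd hπ i aπ p x hπi h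
      · exact idx_bd hσ i aσ p x hσi h
      · have h1 := idx_bd hπ i aπ p u hπi hu
        have h2 := idx_bd hσ i aσ p v hσi hv
        omega
  · -- lengths strictly decrease
    intro i a b ha hb
    rw [dppJoin_getElem?] at hb
    rcases ojoin_eq_some hb with ⟨h, -⟩ | ⟨-, h⟩ | ⟨bπ, bσ, hbπ, hbσ, rfl⟩
    · obtain ⟨aπ, haπ⟩ := exists_prev h
      have := idx_len hπ i aπ b haπ h
      have := join_len_ge_left ha haπ
      omega
    · obtain ⟨aσ, haσ⟩ := exists_prev h
      have := idx_len hσ i aσ b haσ h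
      have := join_len_ge_right ha haσ
      omega
    · obtain ⟨aπ, haπ⟩ := exists_prev hbπ
      obtain ⟨aσ, haσ⟩ := exists_prev hbσ
      have := idx_len hπ i aπ bπ haπ hbπ
      have := idx_len hσ i aσ bσ haσ hbσ
      have := join_len_ge_left ha haπ
      have := join_len_ge_right ha haσ
      rw [zjoin_length]
      omega
  · -- rows weakly decrease
    intro i a p x y ha hx hy
    rw [dppJoin_getElem?] at ha
    rcases ojoin_eq_some ha with ⟨h, -⟩ | ⟨-, h⟩ | ⟨aπ, aσ, hπi, hσi, rfl⟩
    · exact idx_row hπ i a p x y h hx hy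
    · exact idx_row hσ i a p x y h hx hy
    · rw [zjoin_getElem?] at hx hy
      rcases ojoin_eq_some hy with ⟨h, -⟩ | ⟨-, h⟩ | ⟨u, v, hu, hv, rfl⟩
      · obtain ⟨u, hu⟩ := exists_getElem?_of_le (Nat.le_succ p) h
        have h1 := idx_row hπ i aπ p u y hπi hu h
        rw [hu] at hx
        have h2 := le_of_ojoin_left hx
        omega
      · obtain ⟨v, hv⟩ := exists_getElem?_of_le (Nat.le_succ p) h
        have h1 := idx_row hσ i aσ p v y hσi hv h
        rw [hv] at hx
        have h2 := le_of_ojoin_right hx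
        omega
      · obtain ⟨u', hu'⟩ := exists_getElem?_of_le (Nat.le_succ p) hu
        obtain ⟨v', hv'⟩ := exists_getElem?_of_le (Nat.le_succ p) hv
        have h1 := idx_row hπ i aπ p u' u hπi hu' hu
        have h2 := idx_row hσ i aσ p v' v hσi hv' hv
        rw [hu'] at hx
        have h3 := le_of_ojoin_left hx
        rw [hv'] at hx
        have h4 := le_of_ojoin_right hx
        omega
  · -- columns strictly decrease
    intro i a b p x y ha hb hx hy
    rw [dppJoin_getElem?] at hb
    rcases ojoin_eq_some hb with ⟨h, -⟩ | ⟨-, h⟩ | ⟨bπ, bσ, hbπ, hbσ, rfl⟩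
    · obtain ⟨aπ, yπ, haπ, hyπ, hlt⟩ := col_up hπ h hx
      have := join_entry_ge_left ha haπ hyπ hy
      omega
    · obtain ⟨aσ, yσ, haσ, hyσ, hlt⟩ := col_up hσ h hx
      have := join_entry_ge_right ha haσ hyσ hy
      omega
    · rw [zjoin_getElem?] at hx
      rcases ojoin_eq_some hx with ⟨h, -⟩ | ⟨-, h⟩ | ⟨u, v, hu, hv, rfl⟩
      · obtain ⟨aπ, yπ, haπ, hyπ, hlt⟩ := col_up hπ hbπ h
        have := join_entry_ge_left ha haπ hyπ hy
        omega
      · obtain ⟨aσ, yσ, haσ, hyσ, hlt⟩ := col_up hσ hbσ h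
        have := join_entry_ge_right ha haσ hyσ hy
        omega
      · obtain ⟨aπ, yπ, haπ, hyπ, hlt1⟩ := col_up hπ hbπ hu
        obtain ⟨aσ, yσ, haσ, hyσ, hlt2⟩ := col_up hσ hbσ hv
        have := join_entry_ge_left ha haπ hyπ hy
        have := join_entry_ge_right ha haσ hyσ hy
        omega
  · -- head lower bound
    intro i a x ha hx
    rw [dppJoin_getElem?] at ha
    rcases ojoin_eq_some ha with ⟨h, -⟩ | ⟨-, h⟩ | ⟨aπ, aσ, hπi, hσi, rfl⟩
    · exact idx_hd1 hπ i a x h hx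
    · exact idx_hd1 hσ i a x h hx
    · rw [zjoin_getElem?] at hx
      rw [zjoin_length]
      rcases ojoin_eq_some hx with ⟨h, hn'⟩ | ⟨hn', h⟩ | ⟨u, v, hu, hv, rfl⟩
      · have h1 := idx_hd1 hπ i aπ x hπi h
        have h2 : aσ.length ≤ 0 := List.getElem?_eq_none_iff.1 hn'
        omega
      · have h1 := idx_hd1 hσ i aσ x hσi h
        have h2 : aπ.length ≤ 0 := List.getElem?_eq_none_iff.1 hn'
        omega
      · have h1 := idx_hd1 hπ i aπ u hπi hu
        have h2 := idx_hd1 hσ i aσ v hσi hv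
        omega
  · -- head upper bound
    intro i a b x ha hb hx
    rw [dppJoin_getElem?] at hb
    rcases ojoin_eq_some hb with ⟨h, -⟩ | ⟨-, h⟩ | ⟨bπ, bσ, hbπ, hbσ, rfl⟩
    · obtain ⟨aπ, haπ, hle⟩ := hd_up hπ h hx
      have := join_len_ge_left ha haπ
      omega
    · obtain ⟨aσ, haσ, hle⟩ := hd_up hσ h hx
      have := join_len_ge_right ha haσ
      omega
    · rw [zjoin_getElem?] at hx
      rcases ojoin_eq_some hx with ⟨h, -⟩ | ⟨-, h⟩ | ⟨u, v, hu, hv, rfl⟩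
      · obtain ⟨aπ, haπ, hle⟩ := hd_up hπ hbπ h
        have := join_len_ge_left ha haπ
        omega
      · obtain ⟨aσ, haσ, hle⟩ := hd_up hσ hbσ h
        have := join_len_ge_right ha haσ
        omega
      · obtain ⟨aπ, haπ, hle1⟩ := hd_up hπ hbπ hu
        obtain ⟨aσ, haσ, hle2⟩ := hd_up hσ hbσ hv
        have := join_len_ge_left ha haπ
        have := join_len_ge_right ha haσ
        omega

lemma meet_cases {i : ℕ} {c : List ℕ} (hc : (dppMeet π σ)[i]? = some c) :
    ∃ a b, π[i]? = some a ∧ σ[i]? = some b ∧ c = List.zipWith min a b := by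
  rw [dppMeet_getElem?] at hc
  exact bind_map_eq_some hc

lemma zipWith_min_eq_some {a b : List ℕ} {p x : ℕ}
    (h : (List.zipWith min a b)[p]? = some x) :
    ∃ u v, a[p]? = some u ∧ b[p]? = some v ∧ x = min u v := by
  rw [zipWith_getElem?'] at h
  exact bind_map_eq_some h

lemma isDPP_meet (hπ : IsDPP d n π) (hσ : IsDPP d n σ) : IsDPP d n (dppMeet π σ) := by
  apply isDPP_mk
  · intro i a ha
    obtain ⟨aπ, aσ, hπi, hσi, rfl⟩ := meet_cases ha
    rw [List.length_zipWith]
    have := idx_pos hπ i aπ hπi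
    have := idx_pos hσ i aσ hσi
    omega
  · intro i a p x ha hx
    obtain ⟨aπ, aσ, hπi, hσi, rfl⟩ := meet_cases ha
    obtain ⟨u, v, hu, hv, rfl⟩ := zipWith_min_eq_some hx
    have h1 := idx_bd hπ i aπ p u hπi hu
    have h2 := idx_bd hσ i aσ p v hσi hv
    omega
  · intro i a b ha hb
    obtain ⟨aπ, aσ, hπi, hσi, rfl⟩ := meet_cases ha
    obtain ⟨bπ, bσ, hπi', hσi', rfl⟩ := meet_cases hb
    rw [List.length_zipWith, List.length_zipWith]
    have := idx_len hπ i aπ bπ hπi hπi'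
    have := idx_len hσ i aσ bσ hσi hσi'
    omega
  · intro i a p x y ha hx hy
    obtain ⟨aπ, aσ, hπi, hσi, rfl⟩ := meet_cases ha
    obtain ⟨u, v, hu, hv, rfl⟩ := zipWith_min_eq_some hx
    obtain ⟨u', v', hu', hv', rfl⟩ := zipWith_min_eq_some hy
    have h1 := idx_row hπ i aπ p u u' hπi hu hu'
    have h2 := idx_row hσ i aσ p v v' hσi hv hv'
    omega
  · intro i a b p x y ha hb hx hy
    obtain ⟨aπ, aσ, hπi, hσi, rfl⟩ := meet_cases ha
    obtain ⟨bπ, bσ, hπi', hσi', rfl⟩ := meet_cases hb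
    obtain ⟨u, v, hu, hv, rfl⟩ := zipWith_min_eq_some hx
    obtain ⟨u', v', hu', hv', rfl⟩ := zipWith_min_eq_some hy
    have h1 := idx_col hπ i aπ bπ p u u' hπi hπi' hu hu'
    have h2 := idx_col hσ i aσ bσ p v v' hσi hσi' hv hv'
    omega
  · intro i a x ha hx
    obtain ⟨aπ, aσ, hπi, hσi, rfl⟩ := meet_cases ha
    obtain ⟨u, v, hu, hv, rfl⟩ := zipWith_min_eq_some hx
    rw [List.length_zipWith]
    have h1 := idx_hd1 hπ i aπ u hπi hu
    have h2 := idx_hd1 hσ i aσ v hσi hv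
    omega
  · intro i a b x ha hb hx
    obtain ⟨aπ, aσ, hπi, hσi, rfl⟩ := meet_cases ha
    obtain ⟨bπ, bσ, hπi', hσi', rfl⟩ := meet_cases hb
    obtain ⟨u, v, hu, hv, rfl⟩ := zipWith_min_eq_some hx
    rw [List.length_zipWith]
    have h1 := idx_hd2 hπ i aπ bπ u hπi hπi' hu
    have h2 := idx_hd2 hσ i aσ bσ v hσi hσi' hv
    omega

lemma le_join_left : dppLe π (dppJoin π σ) := by
  intro r p x hx
  rw [entry?_join, hx]
  cases hσe : entry? σ r p
  · exact ⟨x, rfl, le_rfl⟩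
  · exact ⟨_, rfl, le_max_left _ _⟩

lemma le_join_right : dppLe σ (dppJoin π σ) := by
  intro r p x hx
  rw [entry?_join, hx]
  cases hπe : entry? π r p
  · exact ⟨x, rfl, le_rfl⟩
  · exact ⟨_, rfl, le_max_right _ _⟩

lemma join_least {ρ : List (List ℕ)} (h1 : dppLe π ρ) (h2 : dppLe σ ρ) :
    dppLe (dppJoin π σ) ρ := by
  intro r p x hx
  rw [entry?_join] at hx
  rcases ojoin_eq_some hx with ⟨h, -⟩ | ⟨-, h⟩ | ⟨u, v, hu, hv, rfl⟩
  · exact h1 r p x h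
  · exact h2 r p x h
  · obtain ⟨y, hy, hyu⟩ := h1 r p u hu
    obtain ⟨y', hy', hyv⟩ := h2 r p v hv
    rw [hy] at hy'
    obtain rfl := Option.some.inj hy'
    exact ⟨y, hy, max_le hyu hyv⟩

lemma meet_le_left : dppLe (dppMeet π σ) π := by
  intro r p x hx
  rw [entry?_meet] at hx
  obtain ⟨u, v, hu, hv, rfl⟩ := bind_map_eq_some hx
  exact ⟨u, hu, min_le_left _ _⟩

lemma meet_le_right : dppLe (dppMeet π σ) σ := by
  intro r p x hx
  rw [entry?_meet] at hx
  obtain ⟨u, v, hu, hv, rfl⟩ := bind_map_eq_some hx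
  exact ⟨v, hv, min_le_right _ _⟩

lemma meet_greatest {ρ : List (List ℕ)} (h1 : dppLe ρ π) (h2 : dppLe ρ σ) :
    dppLe ρ (dppMeet π σ) := by
  intro r p x hx
  obtain ⟨u, hu, hxu⟩ := h1 r p x hx
  obtain ⟨v, hv, hxv⟩ := h2 r p x hx
  refine ⟨min u v, ?_, le_min hxu hxv⟩
  rw [entry?_meet, hu, hv]
  rfl

end DPPAux

/-- For every integer `d ≤ 1`, the poset of `d`-descending plane partitions with entries
at most `n`, ordered entrywise, is a lattice. -/
theorem stmt12 (d : ℤ) (hd : d ≤ 1) (n : ℕ) (hn : 0 < n) (π σ : List (List ℕ))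
    (hπ : IsDPP d n π) (hσ : IsDPP d n σ) :
    (∃ μ, IsDPP d n μ ∧ dppLe π μ ∧ dppLe σ μ ∧
        ∀ ρ, IsDPP d n ρ → dppLe π ρ → dppLe σ ρ → dppLe μ ρ) ∧
    (∃ ν, IsDPP d n ν ∧ dppLe ν π ∧ dppLe ν σ ∧
        ∀ ρ, IsDPP d n ρ → dppLe ρ π → dppLe ρ σ → dppLe ρ ν) := by
  exact ⟨⟨DPPAux.dppJoin π σ, DPPAux.isDPP_join hπ hσ, DPPAux.le_join_left,
      DPPAux.le_join_right, fun ρ _ h1 h2 => DPPAux.join_least h1 h2⟩,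
    ⟨DPPAux.dppMeet π σ, DPPAux.isDPP_meet hπ hσ, DPPAux.meet_le_left,
      DPPAux.meet_le_right, fun ρ _ h1 h2 => DPPAux.meet_greatest h1 h2⟩⟩
end
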